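/- arXiv:1406.3679 — 4 statements merged into one kernel-verified Lean document; each statement's English description precedes it below -/
import Mathlib

section
/- For integers n₁, n₂ ≥ 1, the characteristic polynomial of the distance matrix of G₁ = K₁∨(K_{n₁}∪K_{n₂}) satisfies det(λI − D(G₁)) = (λ+1)^{n₁+n₂−2}·f(λ), where f(λ) = λ³ − (n₁+n₂−2)λ² − (3n₁n₂+2n₁+2n₂−1)λ − 2n₁n₂ − n₁ − n₂. -/
/-- The distance matrix of a graph `G`, with real entries: the `(u,v)` entry is the
distance between `u` and `v` in `G`. -/
noncomputable def distMatrix {V : Type*} [Fintype V] (G : SimpleGraph V) : Matrix V V ℝ :=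
  Matrix.of fun u v => (G.dist u v : ℝ)

/-- The distance matrix is real symmetric (Hermitian). -/
theorem distMatrix_isHermitian {V : Type*} [Fintype V] (G : SimpleGraph V) :
    (distMatrix G).IsHermitian := by
  unfold Matrix.IsHermitian
  ext u v
  simp [distMatrix, Matrix.conjTranspose_apply, SimpleGraph.dist_comm]

/-- The multiset of eigenvalues of the distance matrix of `G` (with multiplicity). -/
noncomputable def distEigMultiset {V : Type*} [Fintype V] [DecidableEq V]
    (G : SimpleGraph V) : Multiset ℝ :=
  Finset.univ.val.map (distMatrix_isHermitian G).eigenvalues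

/-- `distEig G k` is `λ_k(G)`, the `k`-th distance eigenvalue of `G` (1-indexed),
where the distance eigenvalues are arranged in non-increasing order. -/
noncomputable def distEig {V : Type*} [Fintype V] [DecidableEq V]
    (G : SimpleGraph V) (k : ℕ) : ℝ :=
  (((distEigMultiset G).sort (· ≤ ·)).reverse).getD (k - 1) 0

/-- The disjoint union `G ∪ H` of two vertex-disjoint graphs. -/
def graphSum {α β : Type*} (G : SimpleGraph α) (H : SimpleGraph β) : SimpleGraph (α ⊕ β) where
  Adj x y :=
    match x, y with
    | Sum.inl a, Sum.inl b => G.Adj a b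
    | Sum.inr a, Sum.inr b => H.Adj a b
    | _, _ => False
  symm := ⟨by
    rintro (a | a) (b | b) h
    · exact G.adj_symm h
    · exact h
    · exact h
    · exact H.adj_symm h⟩
  loopless := ⟨by
    rintro (a | a) h
    · exact G.irrefl h
    · exact H.irrefl h⟩

/-- The join `G ∨ H` of two vertex-disjoint graphs: their disjoint union together with
all edges joining a vertex of `G` and a vertex of `H`. -/
def graphJoin {α β : Type*} (G : SimpleGraph α) (H : SimpleGraph β) : SimpleGraph (α ⊕ β) where
  Adj x y :=
    match x, y with
    | Sum.inl a, Sum.inl b => G.Adj a b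
    | Sum.inr a, Sum.inr b => H.Adj a b
    | Sum.inl _, Sum.inr _ => True
    | Sum.inr _, Sum.inl _ => True
  symm := ⟨by
    rintro (a | a) (b | b) h
    · exact G.adj_symm h
    · trivial
    · trivial
    · exact H.adj_symm h⟩
  loopless := ⟨by
    rintro (a | a) h
    · exact G.irrefl h
    · exact H.irrefl h⟩

/-- `K₁ ∨ (K_{n₁} ∪ K_{n₂})`. -/
def joinCliques2 (n₁ n₂ : ℕ) : SimpleGraph (Fin 1 ⊕ (Fin n₁ ⊕ Fin n₂)) :=
  graphJoin ⊤ (graphSum ⊤ ⊤)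

/-- `K₁ ∨ (K_{n₁} ∪ K_{n₂} ∪ K_{n₃})`. -/
def joinCliques3 (n₁ n₂ n₃ : ℕ) : SimpleGraph (Fin 1 ⊕ (Fin n₁ ⊕ (Fin n₂ ⊕ Fin n₃))) :=
  graphJoin ⊤ (graphSum ⊤ (graphSum ⊤ ⊤))

/-- `K₁ ∨ (K_{n₁} ∪ K_{n₂} ∪ K_{n₃} ∪ K_{n₄})`. -/
def joinCliques4 (n₁ n₂ n₃ n₄ : ℕ) :
    SimpleGraph (Fin 1 ⊕ (Fin n₁ ⊕ (Fin n₂ ⊕ (Fin n₃ ⊕ Fin n₄)))) :=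
  graphJoin ⊤ (graphSum ⊤ (graphSum ⊤ (graphSum ⊤ ⊤)))

namespace Aux2

variable (n₁ n₂ : ℕ)

/-- The left factor in the rank-3 decomposition of `D + I`. -/
noncomputable def Umat : Matrix (Fin 1 ⊕ (Fin n₁ ⊕ Fin n₂)) (Fin 3) ℝ :=
  Matrix.of fun v j =>
    match v with
    | Sum.inl _ => ![1, 0, 0] j
    | Sum.inr (Sum.inl _) => ![0, 1, 0] j
    | Sum.inr (Sum.inr _) => ![0, 0, 1] j

/-- The right factor in the rank-3 decomposition of `D + I`. -/
noncomputable def Bmat : Matrix (Fin 3) (Fin 1 ⊕ (Fin n₁ ⊕ Fin n₂)) ℝ :=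
  Matrix.of fun j v =>
    match v with
    | Sum.inl _ => 1
    | Sum.inr (Sum.inl _) => ![1, 1, 2] j
    | Sum.inr (Sum.inr _) => ![1, 2, 1] j

lemma adj_hub_l1 (a : Fin 1) (b : Fin n₁) :
    (joinCliques2 n₁ n₂).Adj (Sum.inl a) (Sum.inr (Sum.inl b)) := by trivial

lemma adj_hub_l2 (a : Fin 1) (b : Fin n₂) :
    (joinCliques2 n₁ n₂).Adj (Sum.inl a) (Sum.inr (Sum.inr b)) := by trivial

lemma adj_l1_hub (a : Fin n₁) (b : Fin 1) :
    (joinCliques2 n₁ n₂).Adj (Sum.inr (Sum.inl a)) (Sum.inl b) := by trivial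

lemma adj_l2_hub (a : Fin n₂) (b : Fin 1) :
    (joinCliques2 n₁ n₂).Adj (Sum.inr (Sum.inr a)) (Sum.inl b) := by trivial

lemma adj_c1 {a b : Fin n₁} (h : a ≠ b) :
    (joinCliques2 n₁ n₂).Adj (Sum.inr (Sum.inl a)) (Sum.inr (Sum.inl b)) := h

lemma adj_c2 {a b : Fin n₂} (h : a ≠ b) :
    (joinCliques2 n₁ n₂).Adj (Sum.inr (Sum.inr a)) (Sum.inr (Sum.inr b)) := h

lemma dist_cross (a : Fin n₁) (b : Fin n₂) :
    (joinCliques2 n₁ n₂).dist (Sum.inr (Sum.inl a)) (Sum.inr (Sum.inr b)) = 2 := by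
  have hadj1 : (joinCliques2 n₁ n₂).Adj (Sum.inr (Sum.inl a)) (Sum.inl 0) := by trivial
  have hadj2 : (joinCliques2 n₁ n₂).Adj (Sum.inl 0) (Sum.inr (Sum.inr b)) := by trivial
  have hle : (joinCliques2 n₁ n₂).dist (Sum.inr (Sum.inl a)) (Sum.inr (Sum.inr b)) ≤ 2 :=
    SimpleGraph.dist_le
      (SimpleGraph.Walk.cons hadj1 (SimpleGraph.Walk.cons hadj2 SimpleGraph.Walk.nil))
  have hne1 : (joinCliques2 n₁ n₂).dist (Sum.inr (Sum.inl a)) (Sum.inr (Sum.inr b)) ≠ 1 := by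
    rw [ne_eq, SimpleGraph.dist_eq_one_iff_adj]
    exact fun h => h
  have hne0 : (joinCliques2 n₁ n₂).dist (Sum.inr (Sum.inl a)) (Sum.inr (Sum.inr b)) ≠ 0 := by
    rw [SimpleGraph.dist_ne_zero_iff_ne_and_reachable]
    exact ⟨by simp, ⟨SimpleGraph.Walk.cons hadj1 (SimpleGraph.Walk.cons hadj2 SimpleGraph.Walk.nil)⟩⟩
  omega

lemma distMatrix_eq : distMatrix (joinCliques2 n₁ n₂) = Umat n₁ n₂ * Bmat n₁ n₂ - 1 := by
  ext u v
  rcases u with a | a | a <;> rcases v with b | b | b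
  · have hab : a = b := Subsingleton.elim a b
    subst hab
    simp [distMatrix, Matrix.mul_apply, Fin.sum_univ_three, Umat, Bmat, Matrix.one_apply,
      SimpleGraph.dist_self]
  · simp [distMatrix, Matrix.mul_apply, Fin.sum_univ_three, Umat, Bmat, Matrix.one_apply,
      SimpleGraph.dist_eq_one_iff_adj.2 (adj_hub_l1 n₁ n₂ a b)]
  · simp [distMatrix, Matrix.mul_apply, Fin.sum_univ_three, Umat, Bmat, Matrix.one_apply,
      SimpleGraph.dist_eq_one_iff_adj.2 (adj_hub_l2 n₁ n₂ a b)]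
  · simp [distMatrix, Matrix.mul_apply, Fin.sum_univ_three, Umat, Bmat, Matrix.one_apply,
      SimpleGraph.dist_eq_one_iff_adj.2 (adj_l1_hub n₁ n₂ a b)]
  · by_cases hab : a = b
    · subst hab
      simp [distMatrix, Matrix.mul_apply, Fin.sum_univ_three, Umat, Bmat, Matrix.one_apply,
        SimpleGraph.dist_self]
    · simp [distMatrix, Matrix.mul_apply, Fin.sum_univ_three, Umat, Bmat, Matrix.one_apply,
        hab, SimpleGraph.dist_eq_one_iff_adj.2 (adj_c1 n₁ n₂ hab)]
  · simp [distMatrix, Matrix.mul_apply, Fin.sum_univ_three, Umat, Bmat, Matrix.one_apply,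
      dist_cross]
  · simp [distMatrix, Matrix.mul_apply, Fin.sum_univ_three, Umat, Bmat, Matrix.one_apply,
      SimpleGraph.dist_eq_one_iff_adj.2 (adj_l2_hub n₁ n₂ a b)]
  · have hd : (joinCliques2 n₁ n₂).dist (Sum.inr (Sum.inr a)) (Sum.inr (Sum.inl b)) = 2 := by
      rw [SimpleGraph.dist_comm]; exact dist_cross n₁ n₂ b a
    simp [distMatrix, Matrix.mul_apply, Fin.sum_univ_three, Umat, Bmat, Matrix.one_apply, hd]
  · by_cases hab : a = b
    · subst hab
      simp [distMatrix, Matrix.mul_apply, Fin.sum_univ_three, Umat, Bmat, Matrix.one_apply,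
        SimpleGraph.dist_self]
    · simp [distMatrix, Matrix.mul_apply, Fin.sum_univ_three, Umat, Bmat, Matrix.one_apply,
        hab, SimpleGraph.dist_eq_one_iff_adj.2 (adj_c2 n₁ n₂ hab)]

lemma of_mat_apply {m n : Type*} (M : Matrix m n ℝ) (i : m) (j : n) :
    Matrix.of M i j = M i j := rfl

lemma BU_eq : Bmat n₁ n₂ * Umat n₁ n₂ =
    Matrix.of !![(1 : ℝ), n₁, n₂; 1, n₁, 2 * n₂; 1, 2 * n₁, n₂] := by
  ext i j
  fin_cases i <;> fin_cases j <;>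
    simp [Matrix.mul_apply, Fintype.sum_sum_type, Bmat, Umat, Finset.sum_const,
      Matrix.vecHead, Matrix.vecTail, mul_comm, of_mat_apply]

end Aux2

open Aux2 in
lemma key2 (n₁ n₂ : ℕ) (h₁ : 1 ≤ n₁) (h₂ : 1 ≤ n₂) (lam : ℝ) (hl : lam + 1 ≠ 0) :
    (lam • (1 : Matrix (Fin 1 ⊕ (Fin n₁ ⊕ Fin n₂)) (Fin 1 ⊕ (Fin n₁ ⊕ Fin n₂)) ℝ)
        - distMatrix (joinCliques2 n₁ n₂)).det =
      (lam + 1) ^ (n₁ + n₂ - 2) *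
        (lam ^ 3 - ((n₁ : ℝ) + n₂ - 2) * lam ^ 2
          - (3 * (n₁ : ℝ) * n₂ + 2 * n₁ + 2 * n₂ - 1) * lam
          - 2 * (n₁ : ℝ) * n₂ - n₁ - n₂) := by
  set c : ℝ := lam + 1 with hc
  set U := Umat n₁ n₂
  set B := Bmat n₁ n₂
  have h0 : lam • (1 : Matrix (Fin 1 ⊕ (Fin n₁ ⊕ Fin n₂)) (Fin 1 ⊕ (Fin n₁ ⊕ Fin n₂)) ℝ)
      - distMatrix (joinCliques2 n₁ n₂) = c • 1 - U * B := by
    rw [distMatrix_eq, hc, add_smul, one_smul]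
    abel
  rw [h0]
  have h1 : c • (1 : Matrix (Fin 1 ⊕ (Fin n₁ ⊕ Fin n₂)) (Fin 1 ⊕ (Fin n₁ ⊕ Fin n₂)) ℝ) - U * B
      = c • (1 - U * (c⁻¹ • B)) := by
    rw [smul_sub, Matrix.mul_smul, smul_smul, mul_inv_cancel₀ hl, one_smul]
  rw [h1, Matrix.det_smul, Matrix.det_one_sub_mul_comm]
  have h2 : (1 : Matrix (Fin 3) (Fin 3) ℝ) - (c⁻¹ • B) * U = c⁻¹ • (c • 1 - B * U) := by
    rw [smul_sub, smul_smul, inv_mul_cancel₀ hl, one_smul, Matrix.smul_mul]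
  rw [h2, Matrix.det_smul, BU_eq]
  have hdet3 : (c • (1 : Matrix (Fin 3) (Fin 3) ℝ)
      - Matrix.of !![(1 : ℝ), n₁, n₂; 1, n₁, 2 * n₂; 1, 2 * n₁, n₂]).det =
      c ^ 3 - (1 + (n₁ : ℝ) + n₂) * c ^ 2 - 3 * n₁ * n₂ * c + n₁ * n₂ := by
    rw [Matrix.det_fin_three]
    simp [Matrix.one_fin_three, Matrix.smul_apply, Matrix.vecHead, Matrix.vecTail, of_mat_apply]
    ring
  rw [hdet3]
  have hcard : Fintype.card (Fin 1 ⊕ (Fin n₁ ⊕ Fin n₂)) = n₁ + n₂ + 1 := by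
    simp; ring
  rw [hcard, Fintype.card_fin]
  obtain ⟨m, hm⟩ : ∃ m, n₁ + n₂ = m + 2 := ⟨n₁ + n₂ - 2, by omega⟩
  rw [hm]
  have hexp : (m + 2 + 1 : ℕ) = m + 3 := by omega
  rw [hexp]
  have hmm : m + 2 - 2 = m := by omega
  rw [hmm]
  have hpoly : c ^ 3 - (1 + (n₁ : ℝ) + n₂) * c ^ 2 - 3 * n₁ * n₂ * c + n₁ * n₂ =
      lam ^ 3 - ((n₁ : ℝ) + n₂ - 2) * lam ^ 2
          - (3 * (n₁ : ℝ) * n₂ + 2 * n₁ + 2 * n₂ - 1) * lam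
          - 2 * (n₁ : ℝ) * n₂ - n₁ - n₂ := by
    rw [hc]; ring
  rw [hpoly]
  rw [pow_add]
  field_simp

theorem charpoly_joinCliques2 (n₁ n₂ : ℕ) (h₁ : 1 ≤ n₁) (h₂ : 1 ≤ n₂) (lam : ℝ) :
    (lam • (1 : Matrix (Fin 1 ⊕ (Fin n₁ ⊕ Fin n₂)) (Fin 1 ⊕ (Fin n₁ ⊕ Fin n₂)) ℝ)
        - distMatrix (joinCliques2 n₁ n₂)).det =
      (lam + 1) ^ (n₁ + n₂ - 2) *
        (lam ^ 3 - ((n₁ : ℝ) + n₂ - 2) * lam ^ 2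
          - (3 * (n₁ : ℝ) * n₂ + 2 * n₁ + 2 * n₂ - 1) * lam
          - 2 * (n₁ : ℝ) * n₂ - n₁ - n₂) := by
  have hcont1 : Continuous (fun x : ℝ =>
      (x • (1 : Matrix (Fin 1 ⊕ (Fin n₁ ⊕ Fin n₂)) (Fin 1 ⊕ (Fin n₁ ⊕ Fin n₂)) ℝ)
        - distMatrix (joinCliques2 n₁ n₂)).det) :=
    ((continuous_id.smul continuous_const).sub continuous_const).matrix_det
  have hcont2 : Continuous (fun x : ℝ =>
      (x + 1) ^ (n₁ + n₂ - 2) *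
        (x ^ 3 - ((n₁ : ℝ) + n₂ - 2) * x ^ 2
          - (3 * (n₁ : ℝ) * n₂ + 2 * n₁ + 2 * n₂ - 1) * x
          - 2 * (n₁ : ℝ) * n₂ - n₁ - n₂)) := by
    continuity
  have hdense : Dense ({(-1 : ℝ)}ᶜ) := dense_compl_singleton _
  have heq := Continuous.ext_on hdense hcont1 hcont2 (fun x hx => by
    have hne : x + 1 ≠ 0 := by
      intro h
      exact hx (by simp only [Set.mem_singleton_iff]; linarith)
    exact key2 n₁ n₂ h₁ h₂ x hne)
  exact congrFun heq lam
end

section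
/- Let G be a connected graph on n ≥ 2 vertices. Then λ₂(G) ≤ −1 if and only if G is the complete graph K_n; in that case λ₂(G) = −1. -/
section AuxSpectral
open Matrix

lemma aux_dot_sum {V ι : Type*} [Fintype V] [Fintype ι] (x : V → ℝ) (f : ι → V → ℝ) :
    x ⬝ᵥ (∑ i, f i) = ∑ i, x ⬝ᵥ f i := by
  simp only [dotProduct, Finset.sum_apply, Finset.mul_sum]
  exact Finset.sum_comm

lemma aux_mulVec_sum {V ι : Type*} [Fintype V] [Fintype ι] (A : Matrix V V ℝ) (f : ι → V → ℝ) :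
    A *ᵥ (∑ i, f i) = ∑ i, A *ᵥ f i := by
  ext u
  simp only [Matrix.mulVec, Finset.sum_apply, aux_dot_sum]

lemma aux_quadform {V : Type*} [Fintype V] [DecidableEq V] {A : Matrix V V ℝ}
    (hA : A.IsHermitian) (i₀ : V) (hle : ∀ i, i ≠ i₀ → hA.eigenvalues i ≤ -1)
    (x : V → ℝ) (hx : ⇑(hA.eigenvectorBasis i₀) ⬝ᵥ x = 0) :
    x ⬝ᵥ (A *ᵥ x) ≤ - (x ⬝ᵥ x) := by
  classical
  set b := hA.eigenvectorBasis with hb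
  set c : V → ℝ := fun i => ⇑(b i) ⬝ᵥ x with hc
  have hrepr : x = ∑ i, c i • ⇑(b i) := by
    have h := b.sum_repr' (WithLp.toLp 2 x)
    have h2 : ∀ i, (inner ℝ (b i) (WithLp.toLp 2 x) : ℝ) = c i := by
      intro i
      rw [PiLp.inner_apply]
      simp [hc, dotProduct, mul_comm]
    calc x = ∑ i, (inner ℝ (b i) (WithLp.toLp 2 x) : ℝ) • ⇑(b i) := by
            have h3 := congrArg WithLp.ofLp h
            rw [WithLp.ofLp_sum] at h3
            simp only [WithLp.ofLp_smul] at h3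
            exact h3.symm
      _ = ∑ i, c i • ⇑(b i) := by simp_rw [h2]
  have hAx : A *ᵥ x = ∑ i, (c i * hA.eigenvalues i) • ⇑(b i) := by
    conv_lhs => rw [hrepr]
    rw [show (∑ i, c i • ⇑(b i)) = ∑ i, (c i • ⇑(b i) : V → ℝ) from rfl]
    rw [aux_mulVec_sum]
    refine Finset.sum_congr rfl fun i _ => ?_
    rw [Matrix.mulVec_smul, hA.mulVec_eigenvectorBasis]
    rw [smul_smul, mul_comm]
  have hq : x ⬝ᵥ (A *ᵥ x) = ∑ i, hA.eigenvalues i * (c i)^2 := by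
    rw [hAx, aux_dot_sum]
    refine Finset.sum_congr rfl fun i _ => ?_
    rw [dotProduct_smul, dotProduct_comm]
    simp only [hc, smul_eq_mul]
    ring
  have hn : x ⬝ᵥ x = ∑ i, (c i)^2 := by
    nth_rewrite 2 [hrepr]
    rw [show (∑ i, c i • ⇑(b i)) = ∑ i, (c i • ⇑(b i) : V → ℝ) from rfl]
    rw [aux_dot_sum]
    refine Finset.sum_congr rfl fun i _ => ?_
    rw [dotProduct_smul, dotProduct_comm]
    simp only [hc, smul_eq_mul]
    ring
  rw [hq, hn, ← Finset.sum_neg_distrib]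
  refine Finset.sum_le_sum fun i _ => ?_
  by_cases hi : i = i₀
  · subst hi
    simp [hc, hx]
  · have := hle i hi
    nlinarith [sq_nonneg (c i)]

lemma aux_sum_eigenvalues {V : Type*} [Fintype V] [DecidableEq V] {A : Matrix V V ℝ}
    (hA : A.IsHermitian) : ∑ i, hA.eigenvalues i = A.trace := by
  have h := hA.spectral_theorem
  have : A.trace = (Matrix.diagonal (RCLike.ofReal ∘ hA.eigenvalues) : Matrix V V ℝ).trace := by
    conv_lhs => rw [h]
    rw [Unitary.conjStarAlgAut_apply, Matrix.trace_mul_cycle]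
    congr 1
    have hu : (star (hA.eigenvectorUnitary : Matrix V V ℝ)) * (hA.eigenvectorUnitary : Matrix V V ℝ) = 1 :=
      hA.eigenvectorUnitary.2.1
    rw [hu, Matrix.one_mul]
  rw [this, Matrix.trace_diagonal]
  rfl

lemma aux_top_eigs {V : Type*} [Fintype V] [DecidableEq V] {A : Matrix V V ℝ}
    (hA : A.IsHermitian) (hAdef : ∀ u v, A u v = if u = v then 0 else 1) (i : V) :
    hA.eigenvalues i = -1 ∨ hA.eigenvalues i = (Fintype.card V : ℝ) - 1 := by
  classical
  set μ := hA.eigenvalues i with hμ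
  set v : V → ℝ := ⇑(hA.eigenvectorBasis i) with hv
  have hev : A *ᵥ v = μ • v := hA.mulVec_eigenvectorBasis i
  have hvne : v ≠ 0 := by
    intro h0
    have := hA.eigenvectorBasis.orthonormal.1 i
    rw [show ((hA.eigenvectorBasis i : EuclideanSpace ℝ V)) = (0 : EuclideanSpace ℝ V) from by ext j; simpa using congrFun h0 j] at this
    simp at this
  set S : ℝ := ∑ k, v k with hS
  have key : ∀ k, (μ + 1) * v k = S := by
    intro k
    have h1 : (A *ᵥ v) k = S - v k := by
      simp only [Matrix.mulVec, dotProduct, hAdef]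
      have : ∀ x : V, (if k = x then (0:ℝ) else 1) * v x = v x - (if k = x then v x else 0) := by
        intro x; by_cases h : k = x <;> simp [h]
      rw [Finset.sum_congr rfl (fun x _ => this x), Finset.sum_sub_distrib, Finset.sum_ite_eq]
      simp [hS]
    have h2 : (A *ᵥ v) k = μ * v k := by rw [hev]; simp
    have := h1.symm.trans h2
    linarith
  by_cases hμ1 : μ = -1
  · left; exact hμ1
  · right
    have hne : μ + 1 ≠ 0 := fun h => hμ1 (by linarith)
    have hvk : ∀ k, v k = S / (μ + 1) := by
      intro k
      field_simp
      linarith [key k]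
    have hSne : S ≠ 0 := by
      intro h0
      apply hvne
      funext k
      rw [hvk k, h0]; simp
    have hsum : S = (Fintype.card V : ℝ) * (S / (μ + 1)) := by
      calc S = ∑ k, v k := hS
        _ = ∑ _k : V, S / (μ + 1) := Finset.sum_congr rfl (fun k _ => hvk k)
        _ = (Fintype.card V : ℝ) * (S / (μ + 1)) := by
            rw [Finset.sum_const, nsmul_eq_mul]; simp
    have h3 : S * (μ + 1) = S * (Fintype.card V : ℝ) := by
      calc S * (μ + 1) = ((Fintype.card V : ℝ) * (S / (μ + 1))) * (μ + 1) := by rw [← hsum]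
        _ = S * (Fintype.card V : ℝ) := by field_simp
    have : (μ + 1) = (Fintype.card V : ℝ) := mul_left_cancel₀ hSne h3
    linarith

lemma aux_exists_path2 {V : Type*} [Fintype V] {G : SimpleGraph V}
    (hconn : G.Connected) (hne : G ≠ ⊤) :
    ∃ u v w : V, G.Adj u v ∧ G.Adj v w ∧ G.dist u w = 2 := by
  have : ∃ x y : V, x ≠ y ∧ ¬ G.Adj x y := by
    by_contra h
    push_neg at h
    apply hne
    ext a b
    simp only [SimpleGraph.top_adj]
    exact ⟨fun hab => hab.ne, fun hab => h a b hab⟩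
  obtain ⟨x, y, hxy, hnadj⟩ := this
  have hd0 : G.dist x y ≠ 0 := by
    simp [hconn.dist_eq_zero_iff]
    exact hxy
  have hd1 : G.dist x y ≠ 1 := by
    intro h
    exact hnadj (SimpleGraph.dist_eq_one_iff_adj.mp h)
  have hd2 : 2 ≤ G.dist x y := by omega
  obtain ⟨p, hp⟩ := SimpleGraph.exists_walk_of_dist_ne_zero hd0
  match p, hp with
  | SimpleGraph.Walk.nil, hp => simp at hp hd2
  | SimpleGraph.Walk.cons h1 SimpleGraph.Walk.nil, hp => simp at hp; omega
  | SimpleGraph.Walk.cons (v := v) h1 (SimpleGraph.Walk.cons (v := w) h2 q), hp =>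
    refine ⟨x, v, w, h1, h2, ?_⟩
    have hle : G.dist x w ≤ 2 := by
      have := SimpleGraph.dist_le (SimpleGraph.Walk.cons h1 (SimpleGraph.Walk.cons h2 SimpleGraph.Walk.nil))
      simpa using this
    have hq : G.dist w y ≤ q.length := SimpleGraph.dist_le q
    have htri : G.dist x y ≤ G.dist x w + G.dist w y := hconn.dist_triangle
    simp [SimpleGraph.Walk.length_cons] at hp
    omega

lemma aux_countP_le_one (L : List ℝ) (hL : L.Pairwise (· ≥ ·)) (c : ℝ)
    (h : L.getD 1 0 ≤ c) : L.countP (fun x => decide (c < x)) ≤ 1 := by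
  match L with
  | [] => simp
  | [a] => simp [List.countP_cons]; split <;> simp
  | a :: b :: t =>
    have hgd : (a :: b :: t : List ℝ).getD 1 0 = b := rfl
    rw [hgd] at h
    have htail : (b :: t).Pairwise (· ≥ ·) := hL.of_cons
    have hb : ∀ x ∈ b :: t, x ≤ c := by
      intro x hx
      rcases List.mem_cons.mp hx with rfl | hx
      · exact h
      · exact le_trans (List.rel_of_pairwise_cons htail hx) h
    have h0 : (b :: t).countP (fun x => decide (c < x)) = 0 := by
      rw [List.countP_eq_zero]
      intro x hx
      simpa using not_lt.mpr (hb x hx)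
    rw [List.countP_cons, h0]
    split <;> simp

open Matrix in
lemma aux_top_distEig {V : Type*} [Fintype V] [DecidableEq V]
    (hcard : 2 ≤ Fintype.card V) :
    distEig (⊤ : SimpleGraph V) 2 = -1 := by
  classical
  set n := Fintype.card V with hn
  have hA := distMatrix_isHermitian (⊤ : SimpleGraph V)
  have hAdef : ∀ u v, distMatrix (⊤ : SimpleGraph V) u v = if u = v then 0 else 1 := by
    intro u v
    by_cases h : u = v
    · simp [distMatrix, h]
    · have hadj : (⊤ : SimpleGraph V).Adj u v := by simpa using h
      have hd : (⊤ : SimpleGraph V).dist u v = 1 := SimpleGraph.dist_eq_one_iff_adj.mpr hadj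
      simp [distMatrix, h, hd]
  set μ := hA.eigenvalues with hμ
  have hclass : ∀ i, μ i = -1 ∨ μ i = (n:ℝ) - 1 := aux_top_eigs hA hAdef
  have htr : (distMatrix (⊤ : SimpleGraph V)).trace = 0 := by
    unfold Matrix.trace Matrix.diag
    refine Finset.sum_eq_zero fun i _ => ?_
    rw [hAdef]
    simp
  have hsum : ∑ i, μ i = 0 := by rw [hμ, aux_sum_eigenvalues hA, htr]
  set p : V → Prop := fun i => μ i = (n:ℝ) - 1 with hp
  set S := Finset.univ.filter p with hSdef
  set T := Finset.univ.filter (fun i => ¬ p i) with hTdef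
  have hout : ∀ i ∈ T, μ i = -1 := by
    intro i hi
    refine (hclass i).resolve_right ?_
    simpa [hTdef, hp] using hi
  have hin : ∀ i ∈ S, μ i = (n:ℝ) - 1 := by
    intro i hi
    simpa [hSdef, hp] using hi
  have hcardsum : S.card + T.card = n := by
    rw [hSdef, hTdef, Finset.card_filter_add_card_filter_not]
    simp [hn]
  have hcards : S.card = 1 := by
    have hsplit : (∑ i ∈ S, μ i) + (∑ i ∈ T, μ i) = 0 := by
      rw [hSdef, hTdef, Finset.sum_filter_add_sum_filter_not, hsum]
    have h1 : ∑ i ∈ S, μ i = (S.card : ℝ) * ((n:ℝ) - 1) := by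
      rw [Finset.sum_congr rfl hin, Finset.sum_const, nsmul_eq_mul]
    have h2 : ∑ i ∈ T, μ i = -(T.card : ℝ) := by
      rw [Finset.sum_congr rfl hout, Finset.sum_const, nsmul_eq_mul]
      ring
    rw [h1, h2] at hsplit
    have hTc : (T.card : ℝ) = (n : ℝ) - S.card := by
      have := hcardsum
      push_cast [← this]
      ring
    rw [hTc] at hsplit
    have hn0 : (n : ℝ) ≠ 0 := by
      have : 0 < n := lt_of_lt_of_le (by norm_num) hcard
      positivity
    have : (S.card : ℝ) = 1 := by
      have hexp : ((S.card : ℝ) - 1) * (n : ℝ) = 0 := by ring_nf; ring_nf at hsplit; linarith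
      rcases mul_eq_zero.mp hexp with h | h
      · linarith
      · exact absurd h hn0
    exact_mod_cast this
  have hTcard : T.card = n - 1 := by omega
  have hm : distEigMultiset (⊤ : SimpleGraph V) =
      ((n:ℝ) - 1) ::ₘ Multiset.replicate (n-1) (-1 : ℝ) := by
    have hfil : (Finset.univ.val.filter p) + (Finset.univ.val.filter (fun i => ¬ p i)) =
        Finset.univ.val := Multiset.filter_add_not _ _
    have : distEigMultiset (⊤ : SimpleGraph V) = Multiset.map μ Finset.univ.val := rfl
    rw [this, ← hfil, Multiset.map_add]
    have hmap1 : Multiset.map μ (Finset.univ.val.filter p) =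
        Multiset.replicate 1 ((n:ℝ) - 1) := by
      rw [Multiset.eq_replicate]
      constructor
      · rw [Multiset.card_map]
        have : (Finset.univ.val.filter p) = S.val := by rw [hSdef, Finset.filter_val]
        rw [this]
        exact hcards
      · intro b hb
        obtain ⟨i, hi, rfl⟩ := Multiset.mem_map.mp hb
        exact (Multiset.mem_filter.mp hi).2
    have hmap2 : Multiset.map μ (Finset.univ.val.filter (fun i => ¬ p i)) =
        Multiset.replicate (n-1) (-1 : ℝ) := by
      rw [Multiset.eq_replicate]
      constructor
      · rw [Multiset.card_map]
        have : (Finset.univ.val.filter (fun i => ¬ p i)) = T.val := by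
          rw [hTdef, Finset.filter_val]
        rw [this]
        exact hTcard
      · intro b hb
        obtain ⟨i, hi, rfl⟩ := Multiset.mem_map.mp hb
        exact (hclass i).resolve_right (Multiset.mem_filter.mp hi).2
    rw [hmap1, hmap2]
    rw [show Multiset.replicate 1 ((n:ℝ)-1) = {(n:ℝ)-1} from rfl, Multiset.singleton_add]
  have hsort : (distEigMultiset (⊤ : SimpleGraph V)).sort (· ≤ ·) =
      List.replicate (n-1) (-1 : ℝ) ++ [(n:ℝ) - 1] := by
    refine (fun hp hs => List.Perm.eq_of_pairwise' (r := (· ≤ ·)) (Multiset.pairwise_sort _ _) hs hp) ?_ ?_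
    · rw [← Multiset.coe_eq_coe, Multiset.sort_eq, hm]
      have : ((List.replicate (n-1) (-1 : ℝ) ++ [(n:ℝ)-1] : List ℝ) : Multiset ℝ) =
          (Multiset.replicate (n-1) (-1 : ℝ)) + {(n:ℝ)-1} := by
        rw [← Multiset.coe_add, ← Multiset.coe_replicate]
        rfl
      rw [this, add_comm, Multiset.singleton_add]
    · rw [List.pairwise_append]
      refine ⟨List.pairwise_replicate.mpr (Or.inr le_rfl) , by simp, ?_⟩
      intro a ha b hb
      rw [List.eq_of_mem_replicate ha, List.mem_singleton.mp hb]
      have : (2:ℝ) ≤ n := by exact_mod_cast hcard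
      linarith
  have hrev : (((distEigMultiset (⊤ : SimpleGraph V)).sort (· ≤ ·)).reverse) =
      ((n:ℝ) - 1) :: List.replicate (n-1) (-1 : ℝ) := by
    rw [hsort, List.reverse_append, List.reverse_replicate]
    rfl
  show ((((distEigMultiset (⊤ : SimpleGraph V)).sort (· ≤ ·)).reverse).getD (2-1) 0) = -1
  rw [hrev]
  obtain ⟨m, hm2⟩ : ∃ m, n - 1 = m + 1 := ⟨n - 2, by omega⟩
  rw [hm2, List.replicate_succ]
  rfl

theorem secondDistEig_le_neg_one_iff_complete {V : Type*} [Fintype V] [DecidableEq V]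
    (G : SimpleGraph V) (hconn : G.Connected) (hcard : 2 ≤ Fintype.card V) :
    (distEig G 2 ≤ -1 ↔ G = ⊤) ∧ (G = ⊤ → distEig G 2 = -1) := by
  classical
  have part2 : G = ⊤ → distEig G 2 = -1 := by
    intro hG
    subst hG
    exact aux_top_distEig hcard
  refine ⟨⟨?_, fun hG => (part2 hG).le⟩, part2⟩
  intro hle2
  by_contra hG
  obtain ⟨u, v, w, huv, hvw, huw⟩ := aux_exists_path2 hconn hG
  have hA := distMatrix_isHermitian G
  set μ := hA.eigenvalues with hμ
  set L : List ℝ := (((distEigMultiset G).sort (· ≤ ·)).reverse) with hL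
  have hDE : distEig G 2 = L.getD 1 0 := rfl
  have hLsorted : L.Pairwise (· ≥ ·) := by
    rw [hL, List.pairwise_reverse]
    have hs := Multiset.pairwise_sort (distEigMultiset G) (· ≤ ·)
    exact hs.imp (fun {a b} h => h)
  have hcount : L.countP (fun x => decide ((-1:ℝ) < x)) ≤ 1 :=
    aux_countP_le_one L hLsorted (-1) (by rw [← hDE]; exact hle2)
  -- at most one eigenvalue exceeds -1
  have key : ∀ i j, i ≠ j → -1 < μ i → -1 < μ j → False := by
    intro i j hij hi hj
    have h2le : 2 ≤ (Finset.univ.filter (fun i => (-1:ℝ) < μ i)).card := by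
      rw [Nat.succ_le_iff]
      exact Finset.one_lt_card.mpr
        ⟨i, Finset.mem_filter.mpr ⟨Finset.mem_univ _, hi⟩,
         j, Finset.mem_filter.mpr ⟨Finset.mem_univ _, hj⟩, hij⟩
    have hcnt : Multiset.countP (fun x => (-1:ℝ) < x) (distEigMultiset G) =
        (Finset.univ.filter (fun i => (-1:ℝ) < μ i)).card := by
      rw [show distEigMultiset G = Multiset.map μ Finset.univ.val from rfl,
        Multiset.countP_map]
      rfl
    have hperm : List.Perm ((distEigMultiset G).sort (· ≤ ·)) L := (List.reverse_perm _).symm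
    have hLcnt : Multiset.countP (fun x => (-1:ℝ) < x) (distEigMultiset G) =
        L.countP (fun x => decide ((-1:ℝ) < x)) := by
      conv_lhs => rw [← Multiset.sort_eq (distEigMultiset G) (· ≤ ·)]
      rw [Multiset.coe_countP]
      exact hperm.countP_eq _
    omega
  -- pick i₀ such that all other eigenvalues are ≤ -1
  have hne : Nonempty V := Fintype.card_pos_iff.mp (by omega)
  obtain ⟨i₀, hi₀⟩ : ∃ i₀, ∀ i, i ≠ i₀ → μ i ≤ -1 := by
    by_cases hex : ∃ i, -1 < μ i
    · obtain ⟨i₀, hi₀⟩ := hex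
      exact ⟨i₀, fun i hi => by
        by_contra hgt
        exact key i i₀ hi (lt_of_not_ge hgt) hi₀⟩
    · push_neg at hex
      exact ⟨Classical.arbitrary V, fun i _ => hex i⟩
  -- distances
  have huw0 : u ≠ w := by
    intro h
    rw [h, SimpleGraph.dist_self] at huw
    omega
  have huvne : u ≠ v := huv.ne
  have hvwne : v ≠ w := hvw.ne
  have e_uv : distMatrix G u v = 1 := by
    simp [distMatrix, SimpleGraph.dist_eq_one_iff_adj.mpr huv]
  have e_vu : distMatrix G v u = 1 := by
    simp [distMatrix, SimpleGraph.dist_eq_one_iff_adj.mpr huv.symm]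
  have e_vw : distMatrix G v w = 1 := by
    simp [distMatrix, SimpleGraph.dist_eq_one_iff_adj.mpr hvw]
  have e_wv : distMatrix G w v = 1 := by
    simp [distMatrix, SimpleGraph.dist_eq_one_iff_adj.mpr hvw.symm]
  have e_uw : distMatrix G u w = 2 := by simp [distMatrix, huw]
  have e_wu : distMatrix G w u = 2 := by
    simp [distMatrix, SimpleGraph.dist_comm (u := w) (v := u), huw]
  have e_uu : distMatrix G u u = 0 := by simp [distMatrix]
  have e_vv : distMatrix G v v = 0 := by simp [distMatrix]
  have e_ww : distMatrix G w w = 0 := by simp [distMatrix]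
  -- build the test vector
  set f : V → ℝ := ⇑(hA.eigenvectorBasis i₀) with hf
  obtain ⟨a, c, habne, horth⟩ : ∃ a c : ℝ, ¬ (a = 0 ∧ c = 0) ∧
      a * (f u + f w) + c * f v = 0 := by
    by_cases h : f v = 0 ∧ f u + f w = 0
    · exact ⟨1, 0, by simp, by rw [h.1, h.2]; ring⟩
    · refine ⟨f v, -(f u + f w), ?_, by ring⟩
      intro ⟨h1, h2⟩
      exact h ⟨h1, by linarith⟩
  set x : V → ℝ := a • (Pi.single u (1:ℝ) : V → ℝ) + c • (Pi.single v (1:ℝ) : V → ℝ) + a • (Pi.single w (1:ℝ) : V → ℝ) with hx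
  have hxorth : f ⬝ᵥ x = 0 := by
    rw [hx]
    simp only [dotProduct_add, dotProduct_smul, dotProduct_single,
      smul_eq_mul, mul_one]
    linarith [horth]
  have hineq := aux_quadform hA i₀ hi₀ x hxorth
  have hqval : x ⬝ᵥ ((distMatrix G) *ᵥ x) = 4*a^2 + 4*a*c := by
    rw [hx]
    simp only [Matrix.mulVec_add, Matrix.mulVec_smul, Matrix.mulVec_single,
      dotProduct_add, dotProduct_smul, add_dotProduct,
      smul_dotProduct, single_dotProduct, smul_eq_mul, one_mul, mul_one,
      Pi.add_apply, Pi.smul_apply, Matrix.col_apply, op_smul_eq_mul]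
    rw [e_uv, e_vu, e_vw, e_wv, e_uw, e_wu, e_uu, e_vv, e_ww]
    ring
  have hnval : x ⬝ᵥ x = 2*a^2 + c^2 := by
    rw [hx]
    simp only [dotProduct_add, add_dotProduct, dotProduct_smul,
      smul_dotProduct, single_dotProduct, smul_eq_mul, one_mul,
      Pi.add_apply, Pi.smul_apply, Pi.single_apply]
    simp [huvne, hvwne, huw0, huvne.symm, hvwne.symm, (Ne.symm huw0)]
    ring
  rw [hqval, hnval] at hineq
  have ha0 : a = 0 := by nlinarith [sq_nonneg (2*a + c)]
  have hc0 : c = 0 := by nlinarith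
  exact habne ⟨ha0, hc0⟩

end AuxSpectral
end

section
/- If G is a connected graph that is not complete, then λ₂(G) ≥ 1 − √3. -/
open Classical in
lemma exists_triple {V : Type*} (G : SimpleGraph V) (hconn : G.Connected) (hnc : G ≠ ⊤) :
    ∃ a w v : V, G.Adj a w ∧ G.Adj w v ∧ ¬ G.Adj a v ∧ a ≠ v := by
  have h1 : ∃ a b : V, a ≠ b ∧ ¬ G.Adj a b := by
    by_contra h
    push_neg at h
    apply hnc
    ext a b
    simp only [SimpleGraph.top_adj]
    exact ⟨fun h' => G.ne_of_adj h', h a b⟩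
  obtain ⟨a, b, hab, hnadj⟩ := h1
  obtain ⟨p⟩ := hconn.preconnected a b
  have hlen : 0 < p.length := by
    rcases Nat.eq_zero_or_pos p.length with h | h
    · exact absurd (p.eq_of_length_eq_zero h) hab
    · exact h
  have hP : ∃ i, ¬ G.Adj a (p.getVert i) ∧ p.getVert i ≠ a := by
    exact ⟨p.length, by simpa [p.getVert_length] using ⟨hnadj, hab.symm⟩⟩
  classical
  let i := Nat.find hP
  have hi : ¬ G.Adj a (p.getVert i) ∧ p.getVert i ≠ a := Nat.find_spec hP
  have hile : i ≤ p.length := Nat.find_le (by simpa [p.getVert_length] using ⟨hnadj, hab.symm⟩)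
  have hi1 : 1 ≤ i := by
    rcases Nat.eq_zero_or_pos i with h | h
    · exfalso; apply hi.2; rw [h, p.getVert_zero]
    · exact h
  have hi2 : 2 ≤ i := by
    rcases Nat.lt_or_ge i 2 with h | h
    · interval_cases i
      · exact absurd (by simpa [p.getVert_zero] using p.adj_getVert_succ hlen) hi.1
    · exact h
  have hlt : i - 1 < p.length := by omega
  have hwv : G.Adj (p.getVert (i-1)) (p.getVert i) := by
    have := p.adj_getVert_succ hlt
    rwa [Nat.sub_add_cancel hi1] at this
  have hprev : ¬ (¬ G.Adj a (p.getVert (i-1)) ∧ p.getVert (i-1) ≠ a) :=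
    Nat.find_min hP (by omega)
  push_neg at hprev
  by_cases hadj : G.Adj a (p.getVert (i-1))
  · exact ⟨a, p.getVert (i-1), p.getVert i, hadj, hwv, hi.1, fun h => hi.2 h.symm⟩
  · rw [hprev hadj] at hwv
    exact absurd hwv hi.1


open Matrix in
lemma ray_expand {V : Type*} [Fintype V] [DecidableEq V] {A : Matrix V V ℝ}
    (hA : A.IsHermitian) (x : EuclideanSpace ℝ V) :
    x ⬝ᵥ (A *ᵥ x) = ∑ i, hA.eigenvalues i * (hA.eigenvectorBasis.repr x i)^2 ∧
    x ⬝ᵥ x = ∑ i, (hA.eigenvectorBasis.repr x i)^2 := by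
  have hdot : ∀ y z : EuclideanSpace ℝ V, (y : V → ℝ) ⬝ᵥ (z : V → ℝ) = inner ℝ y z := by
    intro y z
    rw [PiLp.inner_apply]
    simp [dotProduct, mul_comm]
  constructor
  · have hx : (x : V → ℝ) = ∑ i, hA.eigenvectorBasis.repr x i • (hA.eigenvectorBasis i : V → ℝ) := by
      have := hA.eigenvectorBasis.sum_repr x
      exact (congrArg WithLp.ofLp this.symm).trans (by rw [WithLp.ofLp_sum]; simp only [WithLp.ofLp_smul])
    have hAx : A *ᵥ (x : V → ℝ)
        = ∑ i, (hA.eigenvalues i * hA.eigenvectorBasis.repr x i) • (hA.eigenvectorBasis i : V → ℝ) := by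
      conv_lhs => rw [hx]
      rw [show A *ᵥ (∑ i, hA.eigenvectorBasis.repr x i • (hA.eigenvectorBasis i : V → ℝ))
          = A.mulVecLin (∑ i, hA.eigenvectorBasis.repr x i • (hA.eigenvectorBasis i : V → ℝ)) from rfl,
        map_sum]
      refine Finset.sum_congr rfl fun i _ => ?_
      rw [_root_.map_smul, mulVecLin_apply]; erw [hA.mulVec_eigenvectorBasis i]; rw [smul_smul, mul_comm]
    rw [hAx]
    have : (x : V → ℝ) ⬝ᵥ (∑ i, (hA.eigenvalues i * hA.eigenvectorBasis.repr x i) • (hA.eigenvectorBasis i : V → ℝ))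
        = inner ℝ x (∑ i, (hA.eigenvalues i * hA.eigenvectorBasis.repr x i) • (hA.eigenvectorBasis i)) := by
      rw [← hdot, WithLp.ofLp_sum]; simp only [WithLp.ofLp_smul]
    rw [this, inner_sum]
    refine Finset.sum_congr rfl fun i _ => ?_
    rw [real_inner_smul_right, real_inner_comm, ← OrthonormalBasis.repr_apply_apply]
    ring
  · rw [hdot x x]
    rw [← hA.eigenvectorBasis.repr.inner_map_map x x, PiLp.inner_apply]
    simp [sq]

open Matrix in
lemma two_eigs_ge {V : Type*} [Fintype V] [DecidableEq V] {A : Matrix V V ℝ}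
    (hA : A.IsHermitian) (c : ℝ) (y z : V → ℝ)
    (hind : ∀ p q : ℝ, p • y + q • z = 0 → p = 0 ∧ q = 0)
    (hray : ∀ p q : ℝ, c * ((p • y + q • z) ⬝ᵥ (p • y + q • z))
      ≤ (p • y + q • z) ⬝ᵥ (A *ᵥ (p • y + q • z))) :
    ∃ i j, i ≠ j ∧ c ≤ hA.eigenvalues i ∧ c ≤ hA.eigenvalues j := by
  by_contra hcon
  push_neg at hcon
  have key : ∀ x : EuclideanSpace ℝ V, x ≠ 0 →
      c * ((x : V → ℝ) ⬝ᵥ (x : V → ℝ)) ≤ (x : V → ℝ) ⬝ᵥ (A *ᵥ (x : V → ℝ)) →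
      (∀ i, hA.eigenvectorBasis.repr x i ≠ 0 → hA.eigenvalues i < c) → False := by
    intro x hx0 hle hsmall
    obtain ⟨h1, h2⟩ := ray_expand hA x
    have hlt : ∑ i, hA.eigenvalues i * (hA.eigenvectorBasis.repr x i)^2
        < ∑ i, c * (hA.eigenvectorBasis.repr x i)^2 := by
      have hex : ∃ i, hA.eigenvectorBasis.repr x i ≠ 0 := by
        by_contra hall
        push_neg at hall
        apply hx0
        have h0 : hA.eigenvectorBasis.repr x = 0 := by
          ext i; exact hall i
        simpa using (map_eq_zero_iff _ (hA.eigenvectorBasis.repr.injective)).mp h0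
      obtain ⟨i0, hi0⟩ := hex
      apply Finset.sum_lt_sum
      · intro i _
        rcases eq_or_ne (hA.eigenvectorBasis.repr x i) 0 with h | h
        · simp [h]
        · have := (hsmall i h).le
          nlinarith [sq_nonneg (hA.eigenvectorBasis.repr x i)]
      · refine ⟨i0, Finset.mem_univ _, ?_⟩
        have hv1 := hsmall i0 hi0
        have hv2 : 0 < (hA.eigenvectorBasis.repr x i0)^2 := by positivity
        nlinarith
    rw [h1, h2, Finset.mul_sum] at hle
    linarith
  -- choose p q killing the (at most one) large-eigenvalue coordinate
  set E := hA.eigenvectorBasis with hE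
  set yE : EuclideanSpace ℝ V := (WithLp.equiv 2 (V → ℝ)).symm y with hyE
  set zE : EuclideanSpace ℝ V := (WithLp.equiv 2 (V → ℝ)).symm z with hzE
  have main : ∀ p q : ℝ, ¬ (p = 0 ∧ q = 0) →
      (∀ i, c ≤ hA.eigenvalues i → p * E.repr yE i + q * E.repr zE i = 0) → False := by
    intro p q hpq horth
    set xE : EuclideanSpace ℝ V := p • yE + q • zE with hxE
    have hx0 : xE ≠ 0 := by
      intro h
      exact hpq (hind p q (by rw [← (show (xE : V → ℝ) = p • y + q • z from rfl), h, WithLp.ofLp_zero]))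
    have hco : (xE : V → ℝ) = p • y + q • z := rfl
    have hrayx : c * ((xE : V → ℝ) ⬝ᵥ (xE : V → ℝ)) ≤ (xE : V → ℝ) ⬝ᵥ (A *ᵥ (xE : V → ℝ)) := by
      rw [hco]; exact hray p q
    refine key xE hx0 hrayx ?_
    intro i hri
    by_contra hge
    push_neg at hge
    apply hri
    have : E.repr xE i = p * E.repr yE i + q * E.repr zE i := by
      rw [hxE]
      simp [map_add, _root_.map_smul]
    rw [this, horth i hge]
  by_cases hex : ∃ i0, c ≤ hA.eigenvalues i0
  · obtain ⟨i0, hi0⟩ := hex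
    have huniq : ∀ i, c ≤ hA.eigenvalues i → i = i0 := by
      intro i hi
      by_contra hne
      exact absurd hi (not_le.mpr (hcon i0 i (Ne.symm hne) hi0))
    set a := E.repr yE i0 with ha
    set b := E.repr zE i0 with hb
    by_cases hab : a = 0 ∧ b = 0
    · exact main 1 0 (by norm_num) (fun i hi => by rw [huniq i hi, ← ha, ← hb, hab.1, hab.2]; ring)
    · exact main b (-a) (fun h => hab ⟨by simpa using h.2, h.1⟩)
        (fun i hi => by rw [huniq i hi, ← ha, ← hb]; ring)
  · push_neg at hex
    exact main 1 0 (by norm_num) (fun i hi => absurd hi (not_le.mpr (hex i)))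


lemma sorted_ge_head {c : ℝ} {l : List ℝ} (hs : l.Pairwise (· ≥ ·)) {a : ℝ}
    (ha : a ∈ l) : a ≤ l.getD 0 0 := by
  cases l with
  | nil => simp at ha
  | cons x xs =>
    rcases List.mem_cons.mp ha with h | h
    · simp [h]
    · simpa using List.rel_of_pairwise_cons hs h

lemma sorted_ge_second {c : ℝ} {l : List ℝ} (hs : l.Pairwise (· ≥ ·))
    (h2 : 2 ≤ l.countP (fun x => decide (c ≤ x))) : c ≤ l.getD 1 0 := by
  cases l with
  | nil => simp at h2
  | cons x xs =>
    rw [List.countP_cons] at h2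
    have h1 : 1 ≤ xs.countP (fun x => decide (c ≤ x)) := by
      split at h2 <;> omega
    obtain ⟨a, ha, hca⟩ := List.countP_pos_iff.mp (Nat.lt_of_lt_of_le Nat.zero_lt_one h1)
    have hca' : c ≤ a := of_decide_eq_true hca
    have := sorted_ge_head (c := c) hs.of_cons ha
    calc c ≤ a := hca'
    _ ≤ xs.getD 0 0 := this
    _ = (x :: xs).getD 1 0 := rfl

lemma multiset_second_ge {c : ℝ} {V : Type*} [Fintype V] [DecidableEq V]
    (f : V → ℝ) (i j : V) (hij : i ≠ j) (hi : c ≤ f i) (hj : c ≤ f j) :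
    c ≤ ((Finset.univ.val.map f).sort (· ≤ ·)).reverse.getD 1 0 := by
  set M : Multiset ℝ := Finset.univ.val.map f with hM
  have hcount : 2 ≤ M.countP (fun x => c ≤ x) := by
    rw [hM, Multiset.countP_map]
    have : ({i, j} : Finset V) ⊆ Finset.univ.filter (fun a => c ≤ f a) := by
      intro t ht
      simp only [Finset.mem_insert, Finset.mem_singleton] at ht
      rcases ht with rfl | rfl <;> simp [hi, hj]
    have hc2 : ({i, j} : Finset V).card = 2 := Finset.card_pair hij
    calc (2:ℕ) = ({i, j} : Finset V).card := hc2.symm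
      _ ≤ (Finset.univ.filter (fun a => c ≤ f a)).card := Finset.card_le_card this
      _ = Multiset.card (Finset.univ.val.filter (fun a => c ≤ f a)) := rfl
  set l := M.sort (· ≤ ·) with hl
  have hsorted : l.reverse.Pairwise (· ≥ ·) := by
    rw [List.pairwise_reverse]
    exact M.pairwise_sort (· ≤ ·)
  apply sorted_ge_second hsorted
  have hcl : l.reverse.countP (fun x => decide (c ≤ x)) = M.countP (fun x => c ≤ x) := by
    rw [List.countP_reverse]
    have : (l : Multiset ℝ) = M := M.sort_eq (· ≤ ·)
    rw [← this, Multiset.coe_countP]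
  omega

open Matrix in
lemma exists_two_dist_eigs {V : Type*} [Fintype V] [DecidableEq V]
    (G : SimpleGraph V) (hconn : G.Connected)
    (u w v : V) (huw : G.Adj u w) (hwv : G.Adj w v) (hnuv : ¬ G.Adj u v) (huv : u ≠ v) :
    ∃ i j, i ≠ j ∧ 1 - Real.sqrt 3 ≤ (distMatrix_isHermitian G).eigenvalues i ∧
      1 - Real.sqrt 3 ≤ (distMatrix_isHermitian G).eigenvalues j := by
  have hd1 : G.dist u w = 1 := SimpleGraph.dist_eq_one_iff_adj.mpr huw
  have hd2 : G.dist w v = 1 := SimpleGraph.dist_eq_one_iff_adj.mpr hwv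
  have hd3 : G.dist u v = 2 := by
    have hle : G.dist u v ≤ 2 := by
      have := hconn.dist_triangle (u := u) (v := w) (w := v)
      omega
    have h0 : G.dist u v ≠ 0 := Nat.pos_iff_ne_zero.mp (hconn.pos_dist_of_ne huv)
    have h1 : G.dist u v ≠ 1 := fun h => hnuv (SimpleGraph.dist_eq_one_iff_adj.mp h)
    omega
  set Dm := distMatrix G with hDm
  have e_uv : Dm u v = 2 := by rw [hDm]; simp [distMatrix, hd3]
  have e_vu : Dm v u = 2 := by rw [hDm]; simp only [distMatrix, Matrix.of_apply]; rw [SimpleGraph.dist_comm]; simp [hd3]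
  have e_uw : Dm u w = 1 := by rw [hDm]; simp [distMatrix, hd1]
  have e_wu : Dm w u = 1 := by rw [hDm]; simp only [distMatrix, Matrix.of_apply]; rw [SimpleGraph.dist_comm]; simp [hd1]
  have e_wv : Dm w v = 1 := by rw [hDm]; simp [distMatrix, hd2]
  have e_vw : Dm v w = 1 := by rw [hDm]; simp only [distMatrix, Matrix.of_apply]; rw [SimpleGraph.dist_comm]; simp [hd2]
  have e_uu : Dm u u = 0 := by rw [hDm]; simp [distMatrix]
  have e_ww : Dm w w = 0 := by rw [hDm]; simp [distMatrix]
  have e_vv : Dm v v = 0 := by rw [hDm]; simp [distMatrix]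
  set y : V → ℝ := Pi.single u 1 + Pi.single v 1 with hy
  set z : V → ℝ := Pi.single w 1 with hz
  have huw' : u ≠ w := G.ne_of_adj huw
  have hwv' : w ≠ v := G.ne_of_adj hwv
  have hray : ∀ p q : ℝ, (1 - Real.sqrt 3) * ((p • y + q • z) ⬝ᵥ (p • y + q • z))
      ≤ (p • y + q • z) ⬝ᵥ (Dm *ᵥ (p • y + q • z)) := by
    intro p q
    have hxx : (p • y + q • z) ⬝ᵥ (p • y + q • z) = 2*p^2 + q^2 := by
      rw [hy, hz]
      simp [add_dotProduct, dotProduct_add, smul_dotProduct, dotProduct_smul,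
        single_dotProduct, Pi.single_apply, huw', hwv', huv, huv.symm, huw'.symm, hwv'.symm]
      ring
    have hAxx : (p • y + q • z) ⬝ᵥ (Dm *ᵥ (p • y + q • z)) = 4*p^2 + 4*p*q := by
      rw [hy, hz]
      simp [add_dotProduct, smul_dotProduct, mulVec_add, mulVec_smul, mulVec_single,
        single_dotProduct, e_uv, e_vu, e_uw, e_wu, e_wv, e_vw, e_uu, e_ww, e_vv]
      ring
    rw [hxx, hAxx]
    have hs : Real.sqrt 3 ^ 2 = 3 := Real.sq_sqrt (by norm_num)
    have hs1 : (1:ℝ) ≤ Real.sqrt 3 := by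
      nlinarith [Real.sqrt_nonneg 3]
    nlinarith [sq_nonneg ((2 + 2*Real.sqrt 3)*p + 2*q), Real.sqrt_nonneg 3]
  have hind : ∀ p q : ℝ, p • y + q • z = 0 → p = 0 ∧ q = 0 := by
    intro p q h
    have h1 := congrFun h u
    have h2 := congrFun h w
    simp [hy, hz, Pi.single_apply, huw', huv, huw'.symm, huv.symm, hwv'] at h1 h2
    exact ⟨h1, h2⟩
  exact two_eigs_ge (distMatrix_isHermitian G) (1 - Real.sqrt 3) y z hind hray

theorem secondDistEig_ge_of_not_complete {V : Type*} [Fintype V] [DecidableEq V]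
    (G : SimpleGraph V) (hconn : G.Connected) (hnc : G ≠ ⊤) :
    1 - Real.sqrt 3 ≤ distEig G 2 := by
  obtain ⟨u, w, v, huw, hwv, hnuv, huv⟩ := exists_triple G hconn hnc
  obtain ⟨i, j, hij, hci, hcj⟩ := exists_two_dist_eigs G hconn u w v huw hwv hnuv huv
  unfold distEig distEigMultiset
  have h21 : (2:ℕ) - 1 = 1 := rfl
  rw [h21]
  exact multiset_second_ge _ i j hij hci hcj
end

section
/- For every integer n₄ ≥ 2, the second distance eigenvalue of the graph K₁∨(K₁∪K₂∪K₂∪K_{n₄}) lies in the open interval (−1, −0.5858). -/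
set_option maxHeartbeats 1000000


open Matrix Finset in
lemma my_dot_star_mulVec {V : Type*} [Fintype V] [DecidableEq V]
    (U : Matrix.unitaryGroup V ℝ) (x z : V → ℝ) :
    (star (U : Matrix V V ℝ) *ᵥ x) ⬝ᵥ (star (U : Matrix V V ℝ) *ᵥ z) = x ⬝ᵥ z := by
  have hsU : star (U : Matrix V V ℝ) = (U : Matrix V V ℝ)ᵀ := by
    ext i j; simp [Matrix.star_apply]
  rw [hsU, Matrix.mulVec_transpose, ← dotProduct_mulVec,
    Matrix.mulVec_mulVec]
  have h1 : (U : Matrix V V ℝ) * (U : Matrix V V ℝ)ᵀ = 1 := by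
    rw [← hsU]; exact (Matrix.mem_unitaryGroup_iff.mp U.2)
  rw [h1, Matrix.one_mulVec]

open Matrix Finset in
lemma my_quad_form_eq {V : Type*} [Fintype V] [DecidableEq V]
    {A : Matrix V V ℝ} (hA : A.IsHermitian) (x : V → ℝ) :
    x ⬝ᵥ (A *ᵥ x) = ∑ i, hA.eigenvalues i *
      ((star (hA.eigenvectorUnitary : Matrix V V ℝ) *ᵥ x) i)^2 := by
  set U : Matrix V V ℝ := (hA.eigenvectorUnitary : Matrix V V ℝ) with hU
  set y : V → ℝ := star U *ᵥ x with hy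
  have hspec := hA.spectral_theorem
  calc x ⬝ᵥ (A *ᵥ x) = x ⬝ᵥ ((U * Matrix.diagonal (RCLike.ofReal ∘ hA.eigenvalues) * star U) *ᵥ x) := by
        conv_lhs => rw [hspec, Unitary.conjStarAlgAut_apply]
    _ = y ⬝ᵥ (Matrix.diagonal (RCLike.ofReal ∘ hA.eigenvalues) *ᵥ y) := by
        rw [← Matrix.mulVec_mulVec, ← Matrix.mulVec_mulVec, dotProduct_mulVec]
        congr 1
        have hsU : star U = Uᵀ := by ext i j; simp [Matrix.star_apply]
        rw [hy, hsU, Matrix.mulVec_transpose]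
    _ = ∑ i, hA.eigenvalues i * (y i)^2 := by
        simp [dotProduct, Matrix.mulVec_diagonal]
        congr 1; ext i; ring

open Matrix Finset in
lemma my_count_ge_le_one {V : Type*} [Fintype V] [DecidableEq V]
    {A : Matrix V V ℝ} (hA : A.IsHermitian) (c : ℝ) (w : V → ℝ)
    (h : ∀ x : V → ℝ, x ≠ 0 → x ⬝ᵥ w = 0 → x ⬝ᵥ (A *ᵥ x) < c * (x ⬝ᵥ x)) :
    (Finset.univ.filter fun i => c ≤ hA.eigenvalues i).card ≤ 1 := by
  by_contra hcard
  push_neg at hcard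
  obtain ⟨i, hi, j, hj, hij⟩ := Finset.one_lt_card.mp hcard
  rw [Finset.mem_filter] at hi hj
  set U : Matrix V V ℝ := (hA.eigenvectorUnitary : Matrix V V ℝ) with hUdef
  set t : ℝ := (U *ᵥ Pi.single i 1) ⬝ᵥ w with ht
  set s : ℝ := (U *ᵥ Pi.single j 1) ⬝ᵥ w with hs
  obtain ⟨α, β, hαβ, hortho⟩ : ∃ α β : ℝ, ¬(α = 0 ∧ β = 0) ∧ α * t + β * s = 0 := by
    by_cases h0 : t = 0
    · exact ⟨1, 0, by simp, by simp [h0]⟩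
    · exact ⟨s, -t, fun hc => h0 (by simpa using hc.2), by ring⟩
  set y : V → ℝ := (α • (Pi.single i 1 : V → ℝ) + β • (Pi.single j 1 : V → ℝ) : V → ℝ) with hydef
  set x : V → ℝ := U *ᵥ y with hxdef
  have hyx : star U *ᵥ x = y := by
    rw [hxdef, Matrix.mulVec_mulVec]
    rw [show star U * U = 1 from Matrix.mem_unitaryGroup_iff'.mp hA.eigenvectorUnitary.2]
    exact Matrix.one_mulVec y
  have hyval : ∀ k, y k = if k = i then α else if k = j then β else 0 := by
    intro k
    by_cases hki : k = i
    · subst hki; simp [hydef, Pi.single_apply, hij]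
    · by_cases hkj : k = j
      · subst hkj; simp [hydef, Pi.single_apply, hij, Ne.symm hij, hki]
      · simp [hydef, Pi.single_apply, hki, hkj]
  have hsum : ∀ f : V → ℝ, ∑ k, f k * (y k)^2 = f i * α^2 + f j * β^2 := by
    intro f
    rw [show (Finset.univ : Finset V) = insert i (Finset.univ.erase i) from
      (Finset.insert_erase (Finset.mem_univ i)).symm]
    rw [Finset.sum_insert (Finset.notMem_erase i _)]
    rw [show (Finset.univ.erase i) = insert j ((Finset.univ.erase i).erase j) from
      (Finset.insert_erase (Finset.mem_erase.mpr ⟨Ne.symm hij, Finset.mem_univ j⟩)).symm]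
    rw [Finset.sum_insert (Finset.notMem_erase j _)]
    have hz : ∑ k ∈ (Finset.univ.erase i).erase j, f k * (y k)^2 = 0 := by
      apply Finset.sum_eq_zero
      intro k hk
      rw [Finset.mem_erase, Finset.mem_erase] at hk
      rw [hyval k, if_neg hk.2.1, if_neg hk.1]
      ring
    rw [hz, hyval i, hyval j, if_pos rfl, if_neg (Ne.symm hij), if_pos rfl]
    ring
  have hxx : x ⬝ᵥ x = α^2 + β^2 := by
    rw [← my_dot_star_mulVec hA.eigenvectorUnitary x x]
    have h1 : (star (hA.eigenvectorUnitary : Matrix V V ℝ) *ᵥ x) = y := hyx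
    rw [h1]
    have h2 : y ⬝ᵥ y = ∑ k, (1:ℝ) * (y k)^2 := by
      simp only [dotProduct, one_mul, sq]
    rw [h2, hsum]
    ring
  have hxne : x ≠ 0 := by
    intro hx0
    have h0 : α^2 + β^2 = 0 := by rw [← hxx, hx0]; simp
    exact hαβ ⟨by nlinarith [sq_nonneg α, sq_nonneg β], by nlinarith [sq_nonneg α, sq_nonneg β]⟩
  have hxw : x ⬝ᵥ w = 0 := by
    have : x = α • (U *ᵥ (Pi.single i 1 : V → ℝ)) + β • (U *ᵥ (Pi.single j 1 : V → ℝ)) := by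
      rw [hxdef, hydef, Matrix.mulVec_add, Matrix.mulVec_smul, Matrix.mulVec_smul]
    rw [this, add_dotProduct, smul_dotProduct, smul_dotProduct,
      ← ht, ← hs, smul_eq_mul, smul_eq_mul]
    exact hortho
  have hQ : x ⬝ᵥ (A *ᵥ x) = hA.eigenvalues i * α^2 + hA.eigenvalues j * β^2 := by
    rw [my_quad_form_eq hA x]
    have h1 : (star (hA.eigenvectorUnitary : Matrix V V ℝ) *ᵥ x) = y := hyx
    rw [h1]
    exact hsum hA.eigenvalues
  have := h x hxne hxw
  rw [hQ, hxx] at this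
  nlinarith [sq_nonneg α, sq_nonneg β, hi.2, hj.2]

open Matrix Finset in
lemma my_two_le_count_gt {V : Type*} [Fintype V] [DecidableEq V] [Nonempty V]
    {A : Matrix V V ℝ} (hA : A.IsHermitian) (c : ℝ) (u v : V → ℝ)
    (h : ∀ a b : ℝ, ¬(a = 0 ∧ b = 0) →
      c * ((a • u + b • v) ⬝ᵥ (a • u + b • v)) < (a • u + b • v) ⬝ᵥ (A *ᵥ (a • u + b • v))) :
    2 ≤ (Finset.univ.filter fun i => c < hA.eigenvalues i).card := by
  by_contra hcard
  push_neg at hcard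
  have hcard' : (Finset.univ.filter fun i => c < hA.eigenvalues i).card ≤ 1 := by omega
  obtain ⟨i₀, hi₀⟩ : ∃ i₀ : V, ∀ k : V, k ≠ i₀ → hA.eigenvalues k ≤ c := by
    rcases Nat.le_one_iff_eq_zero_or_eq_one.mp hcard' with h0 | h1
    · refine ⟨Classical.arbitrary V, fun k _ => ?_⟩
      by_contra hk
      have hmem : k ∈ Finset.univ.filter fun i => c < hA.eigenvalues i := by
        simp [lt_of_not_ge hk]
      simp [Finset.card_eq_zero.mp h0] at hmem
    · obtain ⟨a, ha⟩ := Finset.card_eq_one.mp h1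
      refine ⟨a, fun k hk => ?_⟩
      by_contra hc2
      have hmem : k ∈ Finset.univ.filter fun i => c < hA.eigenvalues i := by
        simp [lt_of_not_ge hc2]
      rw [ha] at hmem
      exact hk (Finset.mem_singleton.mp hmem)
  set U : Matrix V V ℝ := (hA.eigenvectorUnitary : Matrix V V ℝ) with hUdef
  set yu : V → ℝ := star U *ᵥ u with hyu
  set yv : V → ℝ := star U *ᵥ v with hyv
  obtain ⟨α, β, hαβ, hortho⟩ : ∃ α β : ℝ, ¬(α = 0 ∧ β = 0) ∧ α * yu i₀ + β * yv i₀ = 0 := by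
    by_cases h0 : yu i₀ = 0
    · exact ⟨1, 0, by simp, by simp [h0]⟩
    · exact ⟨yv i₀, -(yu i₀), fun hc => h0 (by simpa using hc.2), by ring⟩
  set x : V → ℝ := α • u + β • v with hxdef
  set y : V → ℝ := star U *ᵥ x with hy
  have hylin : y = α • yu + β • yv := by
    rw [hy, hxdef, Matrix.mulVec_add, Matrix.mulVec_smul, Matrix.mulVec_smul]
  have hyi₀ : y i₀ = 0 := by
    rw [hylin]; simpa using hortho
  have hxx : x ⬝ᵥ x = ∑ k, (y k)^2 := by
    rw [← my_dot_star_mulVec hA.eigenvectorUnitary x x]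
    simp only [dotProduct, ← hUdef, ← hy, sq]
  have hQ : x ⬝ᵥ (A *ᵥ x) = ∑ k, hA.eigenvalues k * (y k)^2 := by
    rw [my_quad_form_eq hA x, ← hUdef, ← hy]
  have hle : x ⬝ᵥ (A *ᵥ x) ≤ c * (x ⬝ᵥ x) := by
    rw [hQ, hxx, Finset.mul_sum]
    apply Finset.sum_le_sum
    intro k _
    by_cases hk : k = i₀
    · subst hk; rw [hyi₀]; simp
    · exact mul_le_mul_of_nonneg_right (hi₀ k hk) (sq_nonneg _)
  exact absurd (h α β hαβ) (not_lt.mpr hle)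


-- second largest element of sorted list: bounds from counts
lemma my_snd_largest_lt {M : Multiset ℝ} {c : ℝ} (hn : 2 ≤ Multiset.card M)
    (hcount : (M.filter (fun x => c ≤ x)).card ≤ 1) :
    ((M.sort (· ≤ ·)).reverse).getD 1 0 < c := by
  set L := M.sort (· ≤ ·) with hL
  have hlen : L.length = Multiset.card M := Multiset.length_sort _
  have hsorted : L.Pairwise (· ≤ ·) := Multiset.pairwise_sort _ _
  have h1 : (1 : ℕ) < L.reverse.length := by rw [List.length_reverse]; omega
  rw [List.getD_eq_getElem _ _ h1]
  have hrev : L.reverse[1] = L[L.length - 1 - 1]'(by omega) := by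
    rw [List.getElem_reverse]
  rw [hrev]
  by_contra hge
  push_neg at hge
  -- both L[n-2] and L[n-1] are ≥ c
  have hn2 : L.length - 1 - 1 < L.length - 1 := by omega
  have hc2 : c ≤ L[L.length - 1]'(by omega) := by
    refine le_trans hge ?_
    have := hsorted.rel_get_of_le (a := ⟨L.length - 1 - 1, by omega⟩)
      (b := ⟨L.length - 1, by omega⟩) (by rw [Fin.mk_le_mk]; omega)
    simpa [List.get_eq_getElem] using this
  -- countP ≥ 2
  have hcnt : 2 ≤ L.countP (fun x => decide (c ≤ x)) := by
    have hsplit : L.countP (fun x => decide (c ≤ x)) =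
        (L.take (L.length - 1)).countP (fun x => decide (c ≤ x)) +
        (L.drop (L.length - 1)).countP (fun x => decide (c ≤ x)) := by
      rw [← List.countP_append, List.take_append_drop]
    have htake : 0 < (L.take (L.length - 1)).countP (fun x => decide (c ≤ x)) := by
      rw [List.countP_pos_iff]
      refine ⟨L[L.length - 1 - 1]'(by omega), ?_, by simpa using hge⟩
      have : (L.take (L.length - 1))[L.length - 1 - 1]'(by
          rw [List.length_take]; omega) = L[L.length - 1 - 1]'(by omega) := by
        rw [List.getElem_take]
      rw [← this]
      exact List.getElem_mem _
    have hdrop : 0 < (L.drop (L.length - 1)).countP (fun x => decide (c ≤ x)) := by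
      rw [List.countP_pos_iff]
      refine ⟨L[L.length - 1]'(by omega), ?_, by simpa using hc2⟩
      have : (L.drop (L.length - 1))[0]'(by rw [List.length_drop]; omega) =
          L[L.length - 1]'(by omega) := by
        simp [List.getElem_drop]
      rw [← this]
      exact List.getElem_mem _
    omega
  -- translate to multiset filter card
  have : (M.filter (fun x => c ≤ x)).card = L.countP (fun x => decide (c ≤ x)) := by
    rw [← Multiset.sort_eq M (· ≤ ·), Multiset.filter_coe, Multiset.coe_card,
      List.countP_eq_length_filter]
  omega

lemma my_snd_largest_gt {M : Multiset ℝ} {c : ℝ}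
    (hcount : 2 ≤ (M.filter (fun x => c < x)).card) :
    c < ((M.sort (· ≤ ·)).reverse).getD 1 0 := by
  set L := M.sort (· ≤ ·) with hL
  have hlen : L.length = Multiset.card M := Multiset.length_sort _
  have hsorted : L.Pairwise (· ≤ ·) := Multiset.pairwise_sort _ _
  have hcnt : 2 ≤ L.countP (fun x => decide (c < x)) := by
    have : (M.filter (fun x => c < x)).card = L.countP (fun x => decide (c < x)) := by
      rw [← Multiset.sort_eq M (· ≤ ·), Multiset.filter_coe, Multiset.coe_card,
        List.countP_eq_length_filter]
    omega
  have hn : 2 ≤ L.length := by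
    by_contra hlt
    push_neg at hlt
    have := List.countP_le_length (l := L) (p := fun x => decide (c < x))
    omega
  have h1 : (1 : ℕ) < L.reverse.length := by rw [List.length_reverse]; omega
  rw [List.getD_eq_getElem _ _ h1]
  have hrev : L.reverse[1] = L[L.length - 1 - 1]'(by omega) := by
    rw [List.getElem_reverse]
  rw [hrev]
  by_contra hge
  push_neg at hge
  -- all elements at positions ≤ n-2 are ≤ c, so countP ≤ 1
  have hsplit : L.countP (fun x => decide (c < x)) =
      (L.take (L.length - 1)).countP (fun x => decide (c < x)) +
      (L.drop (L.length - 1)).countP (fun x => decide (c < x)) := by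
    rw [← List.countP_append, List.take_append_drop]
  have htake : (L.take (L.length - 1)).countP (fun x => decide (c < x)) = 0 := by
    rw [List.countP_eq_zero]
    intro a ha
    obtain ⟨i, hi, rfl⟩ := List.getElem_of_mem ha
    rw [List.getElem_take]
    have hile : i ≤ L.length - 1 - 1 := by
      rw [List.length_take] at hi; omega
    have := hsorted.rel_get_of_le (a := ⟨i, by omega⟩)
      (b := ⟨L.length - 1 - 1, by omega⟩) (by rw [Fin.mk_le_mk]; omega)
    simp only [List.get_eq_getElem] at this
    simpa using not_lt.mpr (le_trans this hge)
  have hdrop : (L.drop (L.length - 1)).countP (fun x => decide (c < x)) ≤ 1 := by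
    calc (L.drop (L.length - 1)).countP (fun x => decide (c < x))
        ≤ (L.drop (L.length - 1)).length := List.countP_le_length
      _ = 1 := by rw [List.length_drop]; omega
  omega


section QF
variable {V : Type*} [Fintype V] [DecidableEq V]

open Finset

lemma my_sum_ite_prod (f g : V → ℝ) (P Q : V → Prop) [DecidablePred P] [DecidablePred Q] :
    ∑ u, ∑ v, (if P u ∧ Q v then f u * g v else 0) =
      (∑ u, if P u then f u else 0) * (∑ v, if Q v then g v else 0) := by
  rw [Finset.sum_mul_sum]
  refine Finset.sum_congr rfl fun u _ => Finset.sum_congr rfl fun v _ => ?_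
  by_cases hp : P u <;> by_cases hq : Q v <;> simp [hp, hq]

lemma my_sum_part_sq (pt : V → Fin 5) (x : V → ℝ) :
    ∑ u, ∑ v, (if pt u = pt v then x u * x v else 0) =
      ∑ i : Fin 5, (∑ u, if pt u = i then x u else 0)^2 := by
  have key : ∀ u v : V, (if pt u = pt v then x u * x v else 0) =
      ∑ i : Fin 5, (if pt u = i ∧ pt v = i then x u * x v else 0) := by
    intro u v
    by_cases h : pt u = pt v
    · rw [if_pos h, Finset.sum_eq_single (pt u)]
      · rw [if_pos ⟨rfl, h.symm⟩]
      · intro i _ hi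
        rw [if_neg (fun hc => hi hc.1.symm)]
      · intro h2; exact absurd (Finset.mem_univ _) h2
    · rw [if_neg h, Finset.sum_eq_zero]
      intro i _
      rw [if_neg (fun hc => h (hc.1.trans hc.2.symm))]
  simp_rw [key]
  calc ∑ u, ∑ v, ∑ i : Fin 5, (if pt u = i ∧ pt v = i then x u * x v else 0)
      = ∑ u, ∑ i : Fin 5, ∑ v, (if pt u = i ∧ pt v = i then x u * x v else 0) := by
        exact Finset.sum_congr rfl fun u _ => Finset.sum_comm
    _ = ∑ i : Fin 5, ∑ u, ∑ v, (if pt u = i ∧ pt v = i then x u * x v else 0) :=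
        Finset.sum_comm
    _ = ∑ i : Fin 5, (∑ u, if pt u = i then x u else 0)^2 := by
        refine Finset.sum_congr rfl fun i _ => ?_
        rw [my_sum_ite_prod x x (fun u => pt u = i) (fun v => pt v = i), sq]
end QF

section QF2
variable {V : Type*} [Fintype V] [DecidableEq V]
open Finset

lemma my_sum_ite_left (f g : V → ℝ) (P : V → Prop) [DecidablePred P] :
    ∑ u, ∑ v, (if P u then f u * g v else 0) =
      (∑ u, if P u then f u else 0) * (∑ v, g v) := by
  rw [Finset.sum_mul_sum]
  refine Finset.sum_congr rfl fun u _ => Finset.sum_congr rfl fun v _ => ?_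
  by_cases hp : P u <;> simp [hp]

lemma my_sum_ite_right (f g : V → ℝ) (P : V → Prop) [DecidablePred P] :
    ∑ u, ∑ v, (if P v then f u * g v else 0) =
      (∑ u, f u) * (∑ v, if P v then g v else 0) := by
  rw [Finset.sum_mul_sum]
  refine Finset.sum_congr rfl fun u _ => Finset.sum_congr rfl fun v _ => ?_
  by_cases hp : P v <;> simp [hp]

lemma my_quad_formula (pt : V → Fin 5) (x : V → ℝ) :
    ∑ u, ∑ v, x u * (if u = v then (0:ℝ) else
        if (pt u = 0 ∨ pt v = 0 ∨ pt u = pt v) then 1 else 2) * x v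
    = 2*(∑ u, x u)^2 - (∑ u, (x u)^2)
      - 2*(∑ u, if pt u = 0 then x u else 0)*(∑ u, x u)
      - (∑ i : Fin 5, (∑ u, if pt u = i then x u else 0)^2)
      + 2*(∑ u, if pt u = 0 then x u else 0)^2 := by
  have key : ∀ u v : V, x u * (if u = v then (0:ℝ) else
        if (pt u = 0 ∨ pt v = 0 ∨ pt u = pt v) then 1 else 2) * x v
      = 2*(x u * x v) - (if u = v then x u * x v else 0)
        - (if pt u = 0 then x u * x v else 0)
        - (if pt v = 0 then x u * x v else 0)
        - (if pt u = pt v then x u * x v else 0)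
        + 2*(if pt u = 0 ∧ pt v = 0 then x u * x v else 0) := by
    intro u v
    by_cases h : u = v
    · subst h
      by_cases h1 : pt u = 0 <;> simp [h1] <;> ring
    · by_cases h1 : pt u = 0 <;> by_cases h2 : pt v = 0 <;> by_cases h3 : pt u = pt v <;>
        first
          | (exact absurd (h1.trans h2.symm) h3)
          | (exact absurd (h3.symm.trans h1) h2)
          | (simp [h, h1, h2, h3, @eq_comm (Fin 5) 0] <;> ring)
  simp only [key]
  have expand : ∀ (a b c d e f : V → V → ℝ),
      (∑ u, ∑ v, (2*(a u v) - b u v - c u v - d u v - e u v + 2*(f u v)))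
      = 2*(∑ u, ∑ v, a u v) - (∑ u, ∑ v, b u v) - (∑ u, ∑ v, c u v)
        - (∑ u, ∑ v, d u v) - (∑ u, ∑ v, e u v) + 2*(∑ u, ∑ v, f u v) := by
    intro a b c d e f
    simp only [Finset.sum_sub_distrib, Finset.sum_add_distrib, ← Finset.mul_sum]
  rw [expand (fun u v => x u * x v) (fun u v => if u = v then x u * x v else 0)
    (fun u v => if pt u = 0 then x u * x v else 0)
    (fun u v => if pt v = 0 then x u * x v else 0)
    (fun u v => if pt u = pt v then x u * x v else 0)
    (fun u v => if pt u = 0 ∧ pt v = 0 then x u * x v else 0)]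
  rw [my_sum_ite_left x x (fun u => pt u = 0), my_sum_ite_right x x (fun v => pt v = 0),
    my_sum_part_sq pt x, my_sum_ite_prod x x (fun u => pt u = 0) (fun v => pt v = 0)]
  have h1 : ∑ u, ∑ v, x u * x v = (∑ u, x u)^2 := by
    rw [← Finset.sum_mul_sum, sq]
  have h2 : ∑ u : V, ∑ v : V, (if u = v then x u * x v else 0) = ∑ u, (x u)^2 := by
    refine Finset.sum_congr rfl fun u _ => ?_
    rw [Finset.sum_ite_eq Finset.univ u (fun v => x u * x v)]
    simp [sq]
  rw [h1, h2]
  ring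
end QF2


lemma my_upper_core (p0 p1 p2 p3 p4 : ℝ)
    (hv : p0 + (1659/1000)*p1 + (1699/1000)*p2 + (1699/1000)*p3 + (1741/1000)*p4 = 0) :
    2*(p0+p1+p2+p3+p4)^2 - 2*p0*(p0+p1+p2+p3+p4) - (p0^2+p1^2+p2^2+p3^2+p4^2) + 2*p0^2
      - (4137/10000)*(p0^2 + p1^2 + p2^2/2 + p3^2/2) ≤ 0 := by
  have hid : 2*(p0 + (1659/1000)*p1 + (1699/1000)*p2 + (1699/1000)*p3 + (1741/1000)*p4)^2
      - (2*(p0+p1+p2+p3+p4)^2 - 2*p0*(p0+p1+p2+p3+p4) - (p0^2+p1^2+p2^2+p3^2+p4^2) + 2*p0^2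
        - (4137/10000)*(p0^2 + p1^2 + p2^2/2 + p3^2/2))
      = (14137/10000)*(p0 + (23180/14137)*p1 + (23980/14137)*p2 + (23980/14137)*p3 + (24820/14137)*p4)^2 + (7899114947/7068500000)*(p1 + ((-2082692183)/7899114947)*p2 + ((-2082692183)/7899114947)*p3 + ((-2071214297)/7899114947)*p4)^2 + (131873970096077/157982298940000)*(p2 + ((-58786967379662)/131873970096077)*p3 + ((-58682942407058)/131873970096077)*p4)^2 + (352820196913221771/527495880384308000)*(p3 + ((-58682942407058)/73087002716415)*p4)^2 + (22837889407220593/730870027164150000)*(p4)^2 := by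
    ring
  rw [hv] at hid
  nlinarith [sq_nonneg (p0 + (23180/14137)*p1 + (23980/14137)*p2 + (23980/14137)*p3 + (24820/14137)*p4),
    sq_nonneg (p1 + ((-2082692183)/7899114947)*p2 + ((-2082692183)/7899114947)*p3 + ((-2071214297)/7899114947)*p4),
    sq_nonneg (p2 + ((-58786967379662)/131873970096077)*p3 + ((-58682942407058)/131873970096077)*p4),
    sq_nonneg (p3 + ((-58682942407058)/73087002716415)*p4),
    sq_nonneg (p4)]
namespace JC4

abbrev Vt (m : ℕ) := Fin 1 ⊕ (Fin 1 ⊕ (Fin 2 ⊕ (Fin 2 ⊕ Fin m)))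

def part {m : ℕ} : Vt m → Fin 5
  | Sum.inl _ => 0
  | Sum.inr (Sum.inl _) => 1
  | Sum.inr (Sum.inr (Sum.inl _)) => 2
  | Sum.inr (Sum.inr (Sum.inr (Sum.inl _))) => 3
  | Sum.inr (Sum.inr (Sum.inr (Sum.inr _))) => 4

lemma adj_iff {m : ℕ} (x y : Vt m) :
    (joinCliques4 1 2 2 m).Adj x y ↔
      x ≠ y ∧ (part x = 0 ∨ part y = 0 ∨ part x = part y) := by
  rcases x with a | (a | (a | (a | a))) <;> rcases y with b | (b | (b | (b | b))) <;>
    simp only [joinCliques4, graphJoin, graphSum, SimpleGraph.top_adj, part, ne_eq,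
      Sum.inl.injEq, Sum.inr.injEq, reduceCtorEq] <;>
    first
      | (constructor
         · intro h; exact ⟨h, by decide⟩
         · rintro ⟨h, _⟩; exact h)
      | (simp [Subsingleton.elim a b])
      | (constructor
         · intro h; exact ⟨by simp, by decide⟩
         · intro _; trivial)
      | (constructor
         · intro h; exact absurd h (by decide)
         · rintro ⟨h, h2⟩; revert h2; decide)
      | decide

def center (m : ℕ) : Vt m := Sum.inl 0

lemma part_center (m : ℕ) : part (center m) = 0 := rfl

lemma dist_matrix_eq {m : ℕ} (u v : Vt m) :
    distMatrix (joinCliques4 1 2 2 m) u v =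
      if u = v then 0 else
        if (part u = 0 ∨ part v = 0 ∨ part u = part v) then 1 else 2 := by
  set G := joinCliques4 1 2 2 m with hG
  by_cases huv : u = v
  · subst huv; simp [distMatrix, SimpleGraph.dist_self]
  · rw [if_neg huv]
    by_cases hadj : (part u = 0 ∨ part v = 0 ∨ part u = part v)
    · rw [if_pos hadj]
      have : G.Adj u v := (adj_iff u v).mpr ⟨huv, hadj⟩
      simp [distMatrix, SimpleGraph.dist_eq_one_iff_adj.mpr this]
    · rw [if_neg hadj]
      have hnadj : ¬ G.Adj u v := fun h => hadj ((adj_iff u v).mp h).2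
      have huc : u ≠ center m := by
        intro h; exact hadj (Or.inl (h ▸ part_center m))
      have hvc : v ≠ center m := by
        intro h; exact hadj (Or.inr (Or.inl (h ▸ part_center m)))
      have hadjuc : G.Adj u (center m) := (adj_iff u (center m)).mpr
        ⟨huc, Or.inr (Or.inl (part_center m))⟩
      have hadjcv : G.Adj (center m) v := (adj_iff (center m) v).mpr
        ⟨fun h => hvc h.symm, Or.inl (part_center m)⟩
      have hwalk : G.dist u v ≤ 2 := by
        have := SimpleGraph.dist_le (SimpleGraph.Walk.cons hadjuc hadjcv.toWalk)
        simpa using this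
      have hreach : G.Reachable u v := ⟨SimpleGraph.Walk.cons hadjuc hadjcv.toWalk⟩
      have hpos : 0 < G.dist u v := hreach.pos_dist_of_ne huv
      have hne1 : G.dist u v ≠ 1 := by
        intro h
        exact hnadj (SimpleGraph.dist_eq_one_iff_adj.mp h)
      have : G.dist u v = 2 := by omega
      simp [distMatrix, this]

end JC4

namespace JC4
open Finset

noncomputable def vcoef : Fin 5 → ℝ := ![1, 1659/1000, 1699/1000, 1699/1000, 1741/1000]

variable {m : ℕ}

-- abbreviations for the six special vertices
def c0 (m : ℕ) : Vt m := Sum.inl 0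
def w1 (m : ℕ) : Vt m := Sum.inr (Sum.inl 0)
def a2 (m : ℕ) : Vt m := Sum.inr (Sum.inr (Sum.inl 0))
def b2 (m : ℕ) : Vt m := Sum.inr (Sum.inr (Sum.inl 1))
def a3 (m : ℕ) : Vt m := Sum.inr (Sum.inr (Sum.inr (Sum.inl 0)))
def b3 (m : ℕ) : Vt m := Sum.inr (Sum.inr (Sum.inr (Sum.inl 1)))

lemma fiber_sum (x : Vt m → ℝ) (f : Fin 5 → ℝ) :
    ∑ u, f (part u) * x u = ∑ i : Fin 5, f i * ∑ u, (if part u = i then x u else 0) := by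
  have : ∀ i : Fin 5, f i * ∑ u, (if part u = i then x u else 0)
      = ∑ u, (if part u = i then f (part u) * x u else 0) := by
    intro i
    rw [Finset.mul_sum]
    refine Finset.sum_congr rfl fun u _ => ?_
    by_cases h : part u = i <;> simp [h]
  simp_rw [this]
  rw [Finset.sum_comm]
  refine Finset.sum_congr rfl fun u _ => ?_
  simp [Finset.sum_ite_eq]

lemma sum_eq_fiber_sum (x : Vt m → ℝ) :
    ∑ u, x u = ∑ i : Fin 5, ∑ u, (if part u = i then x u else 0) := by
  have := fiber_sum x (fun _ => 1)
  simpa using this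

lemma p0_eval (x : Vt m → ℝ) :
    ∑ u, (if part u = (0 : Fin 5) then x u else 0) = x (c0 m) := by
  simp [Fintype.sum_sum_type, part, c0, Fin.sum_univ_two, Fin.isValue]

lemma p1_eval (x : Vt m → ℝ) :
    ∑ u, (if part u = (1 : Fin 5) then x u else 0) = x (w1 m) := by
  simp [Fintype.sum_sum_type, part, w1, Fin.sum_univ_two, Fin.isValue]

lemma p2_eval (x : Vt m → ℝ) :
    ∑ u, (if part u = (2 : Fin 5) then x u else 0) = x (a2 m) + x (b2 m) := by
  simp [Fintype.sum_sum_type, part, a2, b2, Fin.sum_univ_two, Fin.isValue]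

lemma p3_eval (x : Vt m → ℝ) :
    ∑ u, (if part u = (3 : Fin 5) then x u else 0) = x (a3 m) + x (b3 m) := by
  simp [Fintype.sum_sum_type, part, a3, b3, Fin.sum_univ_two, Fin.isValue]

lemma p4_eval (x : Vt m → ℝ) :
    ∑ u, (if part u = (4 : Fin 5) then x u else 0)
      = ∑ a : Fin m, x (Sum.inr (Sum.inr (Sum.inr (Sum.inr a)))) := by
  simp [Fintype.sum_sum_type, part, Fin.sum_univ_two, Fin.isValue]

lemma X_eval (x : Vt m → ℝ) :
    ∑ u, (x u)^2 = (x (c0 m))^2 + (x (w1 m))^2 + (x (a2 m))^2 + (x (b2 m))^2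
      + (x (a3 m))^2 + (x (b3 m))^2
      + ∑ a : Fin m, (x (Sum.inr (Sum.inr (Sum.inr (Sum.inr a)))))^2 := by
  simp [Fintype.sum_sum_type, c0, w1, a2, b2, a3, b3, Fin.sum_univ_two]
  ring

end JC4
namespace JC4
open Finset

variable {m : ℕ}

lemma upper_apply (x : Vt m → ℝ) (hx : x ≠ 0)
    (hw : ∑ u, vcoef (part u) * x u = 0) :
    ∑ u, ∑ v, x u * distMatrix (joinCliques4 1 2 2 m) u v * x v
      < -(5858/10000) * ∑ u, (x u)^2 := by
  set p : Fin 5 → ℝ := fun i => ∑ u, (if part u = i then x u else 0) with hp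
  set S : ℝ := ∑ u, x u with hSdef
  set X : ℝ := ∑ u, (x u)^2 with hXdef
  have hform : ∑ u, ∑ v, x u * distMatrix (joinCliques4 1 2 2 m) u v * x v
      = 2*S^2 - X - 2*(p 0)*S - (∑ i : Fin 5, (p i)^2) + 2*(p 0)^2 := by
    have hD : ∀ u v : Vt m, distMatrix (joinCliques4 1 2 2 m) u v
        = (if u = v then (0:ℝ) else
            if (part u = 0 ∨ part v = 0 ∨ part u = part v) then 1 else 2) :=
      fun u v => dist_matrix_eq u v
    simp_rw [hD]
    exact my_quad_formula part x
  have hS5 : S = p 0 + p 1 + p 2 + p 3 + p 4 := by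
    rw [hSdef, sum_eq_fiber_sum x, Fin.sum_univ_five]
  have hvp : p 0 + (1659/1000)*(p 1) + (1699/1000)*(p 2) + (1699/1000)*(p 3)
      + (1741/1000)*(p 4) = 0 := by
    have hfib := fiber_sum x vcoef
    rw [hw, Fin.sum_univ_five] at hfib
    simp only [vcoef, Matrix.cons_val_zero, Matrix.cons_val_one, Matrix.head_cons,
      Matrix.cons_val_two, Matrix.tail_cons, Matrix.cons_val_three, Matrix.cons_val_four] at hfib
    linarith [hfib]
  have hsq5 : (∑ i : Fin 5, (p i)^2) = (p 0)^2+(p 1)^2+(p 2)^2+(p 3)^2+(p 4)^2 :=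
    Fin.sum_univ_five _
  have h0 : p 0 = x (c0 m) := p0_eval x
  have h1 : p 1 = x (w1 m) := p1_eval x
  have h2 : p 2 = x (a2 m) + x (b2 m) := p2_eval x
  have h3 : p 3 = x (a3 m) + x (b3 m) := p3_eval x
  have hXe : X = (x (c0 m))^2 + (x (w1 m))^2 + (x (a2 m))^2 + (x (b2 m))^2
      + (x (a3 m))^2 + (x (b3 m))^2
      + ∑ a : Fin m, (x (Sum.inr (Sum.inr (Sum.inr (Sum.inr a)))))^2 := X_eval x
  have hnorm : (p 0)^2 + (p 1)^2 + (p 2)^2/2 + (p 3)^2/2 ≤ X := by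
    rw [h0, h1, h2, h3, hXe]
    have htail : 0 ≤ ∑ a : Fin m, (x (Sum.inr (Sum.inr (Sum.inr (Sum.inr a)))))^2 :=
      Finset.sum_nonneg fun a _ => sq_nonneg _
    nlinarith [sq_nonneg (x (a2 m) - x (b2 m)), sq_nonneg (x (a3 m) - x (b3 m)), htail]
  have hXpos : 0 < X := by
    obtain ⟨u, hu⟩ := Function.ne_iff.mp hx
    have hle : (x u)^2 ≤ X := by
      rw [hXdef]
      exact Finset.single_le_sum (fun i _ => sq_nonneg (x i)) (Finset.mem_univ u)
    have hpos : 0 < (x u)^2 := pow_two_pos_of_ne_zero hu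
    linarith
  have hcore := my_upper_core (p 0) (p 1) (p 2) (p 3) (p 4) hvp
  rw [hform, hS5, hsq5]
  linarith [hcore, hnorm, hXpos]

lemma lower_apply (hm : 2 ≤ m) (a b : ℝ) (hab : ¬(a = 0 ∧ b = 0)) :
    (-1) * (∑ u, (((fun u => a + (if u = c0 m then b else 0)) : Vt m → ℝ) u)^2)
      < ∑ u, ∑ v, (a + (if u = c0 m then b else 0))
          * distMatrix (joinCliques4 1 2 2 m) u v * (a + (if v = c0 m then b else 0)) := by
  set x : Vt m → ℝ := fun u => a + (if u = c0 m then b else 0) with hxdef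
  set p : Fin 5 → ℝ := fun i => ∑ u, (if part u = i then x u else 0) with hp
  set S : ℝ := ∑ u, x u with hSdef
  set X : ℝ := ∑ u, (x u)^2 with hXdef
  have hform : ∑ u, ∑ v, x u * distMatrix (joinCliques4 1 2 2 m) u v * x v
      = 2*S^2 - X - 2*(p 0)*S - (∑ i : Fin 5, (p i)^2) + 2*(p 0)^2 := by
    have hD : ∀ u v : Vt m, distMatrix (joinCliques4 1 2 2 m) u v
        = (if u = v then (0:ℝ) else
            if (part u = 0 ∨ part v = 0 ∨ part u = part v) then 1 else 2) :=
      fun u v => dist_matrix_eq u v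
    simp_rw [hD]
    exact my_quad_formula part x
  have hS5 : S = p 0 + p 1 + p 2 + p 3 + p 4 := by
    rw [hSdef, sum_eq_fiber_sum x, Fin.sum_univ_five]
  have hsq5 : (∑ i : Fin 5, (p i)^2) = (p 0)^2+(p 1)^2+(p 2)^2+(p 3)^2+(p 4)^2 :=
    Fin.sum_univ_five _
  have hxc : x (c0 m) = a + b := by simp [hxdef]
  have hxw : x (w1 m) = a := by simp [hxdef, w1, c0]
  have hxa2 : x (a2 m) = a := by simp [hxdef, a2, c0]
  have hxb2 : x (b2 m) = a := by simp [hxdef, b2, c0]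
  have hxa3 : x (a3 m) = a := by simp [hxdef, a3, c0]
  have hxb3 : x (b3 m) = a := by simp [hxdef, b3, c0]
  have hxtail : ∀ i : Fin m, x (Sum.inr (Sum.inr (Sum.inr (Sum.inr i)))) = a := by
    intro i; simp [hxdef, c0]
  have h0' : p 0 = x (c0 m) := p0_eval x
  have h1' : p 1 = x (w1 m) := p1_eval x
  have h2' : p 2 = x (a2 m) + x (b2 m) := p2_eval x
  have h3' : p 3 = x (a3 m) + x (b3 m) := p3_eval x
  have h4' : p 4 = ∑ a : Fin m, x (Sum.inr (Sum.inr (Sum.inr (Sum.inr a)))) := p4_eval x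
  have hXe' : X = (x (c0 m))^2 + (x (w1 m))^2 + (x (a2 m))^2 + (x (b2 m))^2
      + (x (a3 m))^2 + (x (b3 m))^2
      + ∑ a : Fin m, (x (Sum.inr (Sum.inr (Sum.inr (Sum.inr a)))))^2 := X_eval x
  have h0 : p 0 = a + b := by rw [h0', hxc]
  have h1 : p 1 = a := by rw [h1', hxw]
  have h2 : p 2 = 2*a := by rw [h2', hxa2, hxb2]; ring
  have h3 : p 3 = 2*a := by rw [h3', hxa3, hxb3]; ring
  have h4 : p 4 = (m:ℝ)*a := by
    rw [h4']
    simp only [hxtail]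
    simp [Finset.sum_const, Finset.card_univ]
  have hXe : X = (a+b)^2 + (5+(m:ℝ))*a^2 := by
    rw [hXe', hxc, hxw, hxa2, hxb2, hxa3, hxb3]
    simp only [hxtail]
    simp [Finset.sum_const, Finset.card_univ]
    ring
  show (-1) * X < ∑ u, ∑ v, x u * distMatrix (joinCliques4 1 2 2 m) u v * x v
  rw [hform, hS5, hsq5, h0, h1, h2, h3, h4, hXe]
  have hm' : (2:ℝ) ≤ (m:ℝ) := by exact_mod_cast hm
  rcases Classical.em (a = 0) with ha | ha
  · have hb : b ≠ 0 := fun hb => hab ⟨ha, hb⟩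
    subst ha
    have : 0 < b^2 := pow_two_pos_of_ne_zero hb
    nlinarith [this]
  · have ha2 : 0 < a^2 := pow_two_pos_of_ne_zero ha
    nlinarith [sq_nonneg (b + ((m:ℝ)+6)*a), ha2, mul_nonneg (by linarith : (0:ℝ) ≤ (m:ℝ) - 2) (le_of_lt ha2)]

end JC4


open Matrix in
lemma my_filter_card {V : Type*} [Fintype V] [DecidableEq V] (G : SimpleGraph V)
    (P : ℝ → Prop) [DecidablePred P] :
    ((distEigMultiset G).filter P).card =
      (Finset.univ.filter fun i => P ((distMatrix_isHermitian G).eigenvalues i)).card := by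
  unfold distEigMultiset
  rw [Multiset.filter_map, Multiset.card_map]
  rfl

open Matrix Finset JC4 in
theorem secondDistEig_joinCliques4_one_two_two (n₄ : ℕ) (h : 2 ≤ n₄) :
    distEig (joinCliques4 1 2 2 n₄) 2 ∈ Set.Ioo (-1 : ℝ) (-0.5858) := by
  classical
  have hherm : (distMatrix (joinCliques4 1 2 2 n₄)).IsHermitian :=
    distMatrix_isHermitian (joinCliques4 1 2 2 n₄)
  have hcardV : Fintype.card (Vt n₄) = 6 + n₄ := by
    simp [Fintype.card_sum]
    omega
  have hM2 : 2 ≤ Multiset.card (distEigMultiset (joinCliques4 1 2 2 n₄)) := by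
    unfold distEigMultiset
    rw [Multiset.card_map]
    have : (Finset.univ : Finset (Vt n₄)).card = 6 + n₄ := by
      rw [Finset.card_univ, hcardV]
    have h2 : Multiset.card (Finset.univ : Finset (Vt n₄)).val
        = (Finset.univ : Finset (Vt n₄)).card := rfl
    omega
  rw [Set.mem_Ioo]
  constructor
  · -- lower bound: -1 < λ₂
    set uu : Vt n₄ → ℝ := fun _ => 1 with huu
    set vv : Vt n₄ → ℝ := fun u => if u = c0 n₄ then 1 else 0 with hvv
    have happ : ∀ a b : ℝ, ¬(a = 0 ∧ b = 0) →
        (-1 : ℝ) * ((a • uu + b • vv) ⬝ᵥ (a • uu + b • vv))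
          < (a • uu + b • vv) ⬝ᵥ (distMatrix (joinCliques4 1 2 2 n₄) *ᵥ (a • uu + b • vv)) := by
      intro a b hab
      have hx : a • uu + b • vv = (fun u => a + (if u = c0 n₄ then b else 0)) := by
        funext u
        by_cases hu : u = c0 n₄ <;> simp [hu, huu, hvv]
      rw [hx]
      have dot1 : ((fun u => a + (if u = c0 n₄ then b else 0)) : Vt n₄ → ℝ) ⬝ᵥ
          (fun u => a + (if u = c0 n₄ then b else 0)) =
          ∑ u : Vt n₄, ((a + (if u = c0 n₄ then b else 0)))^2 := by
        simp only [dotProduct, pow_two]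
      have dot2 : ((fun u => a + (if u = c0 n₄ then b else 0)) : Vt n₄ → ℝ) ⬝ᵥ
          (distMatrix (joinCliques4 1 2 2 n₄) *ᵥ (fun u => a + (if u = c0 n₄ then b else 0))) =
          ∑ u : Vt n₄, ∑ v : Vt n₄, (a + (if u = c0 n₄ then b else 0))
            * distMatrix (joinCliques4 1 2 2 n₄) u v * (a + (if v = c0 n₄ then b else 0)) := by
        simp only [dotProduct, Matrix.mulVec, Finset.mul_sum, mul_assoc]
      rw [dot1, dot2]
      exact lower_apply h a b hab
    have hcnt := my_two_le_count_gt hherm (-1) uu vv happ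
    have hfilt : 2 ≤ ((distEigMultiset (joinCliques4 1 2 2 n₄)).filter
        (fun x => (-1:ℝ) < x)).card := by
      rw [my_filter_card]
      exact hcnt
    have hres := my_snd_largest_gt hfilt
    simpa [distEig] using hres
  · -- upper bound: λ₂ < -0.5858
    set w : Vt n₄ → ℝ := fun u => vcoef (part u) with hw
    have happ : ∀ x : Vt n₄ → ℝ, x ≠ 0 → x ⬝ᵥ w = 0 →
        x ⬝ᵥ (distMatrix (joinCliques4 1 2 2 n₄) *ᵥ x)
          < (-(5858/10000) : ℝ) * (x ⬝ᵥ x) := by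
      intro x hx hxw
      have hw' : ∑ u, vcoef (part u) * x u = 0 := by
        rw [← hxw]
        simp [dotProduct, hw, mul_comm]
      have dot1 : x ⬝ᵥ x = ∑ u, (x u)^2 := by
        simp only [dotProduct, pow_two]
      have dot2 : x ⬝ᵥ (distMatrix (joinCliques4 1 2 2 n₄) *ᵥ x)
          = ∑ u, ∑ v, x u * distMatrix (joinCliques4 1 2 2 n₄) u v * x v := by
        simp only [dotProduct, Matrix.mulVec, Finset.mul_sum, mul_assoc]
      rw [dot1, dot2]
      exact upper_apply x hx hw'
    have hcnt := my_count_ge_le_one hherm (-(5858/10000)) w happ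
    have hfilt : ((distEigMultiset (joinCliques4 1 2 2 n₄)).filter
        (fun x => (-(5858/10000) : ℝ) ≤ x)).card ≤ 1 := by
      rw [my_filter_card]
      exact hcnt
    have hres := my_snd_largest_lt hM2 hfilt
    have : distEig (joinCliques4 1 2 2 n₄) 2 < -(5858/10000) := by
      simpa [distEig] using hres
    have hnum : (-(5858/10000) : ℝ) = -0.5858 := by norm_num
    linarith [hnum ▸ this]
end
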